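/- arXiv:2105.06287 — 5 statements merged into one kernel-verified Lean document; each statement's English description precedes it below -/
import Mathlib

section
/- For every k ∈ M, A_k = {v(k), v(k)+1, …, k}; that is, the node set of each subtree of the cost-per-capacity graph is a set of consecutive indices whose maximum is the root k. -/
open scoped Classical
open Finset MeasureTheory

namespace BSHM

noncomputable section

/-- The set of candidate parents of machine type `i`: types `j ∈ M` with `j > i`
and a strictly smaller normalized cost rate per capacity unit. -/
def pset (m : ℕ) (g r : ℕ → ℝ) (i : ℕ) : Set ℕ :=
  {j | j ≤ m ∧ i < j ∧ r j / g j < r i / g i}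

/-- The parent `p i` of machine type `i` (equal to `0` when the parent is undefined,
since any actual parent has index `≥ 2`). -/
def p (m : ℕ) (g r : ℕ → ℝ) (i : ℕ) : ℕ := sInf (pset m g r i)

/-- `pdef i` asserts that the parent of `i` is defined. -/
def pdef (m : ℕ) (g r : ℕ → ℝ) (i : ℕ) : Prop := (pset m g r i).Nonempty

/-- One step of the parent relation: `b` is the (defined) parent of `a`. -/
def pstep (m : ℕ) (g r : ℕ → ℝ) (a b : ℕ) : Prop :=
  pdef m g r a ∧ b = p m g r a

/-- `P i`: the set consisting of `i` together with all of its iterated parents. -/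
def P (m : ℕ) (g r : ℕ → ℝ) (i : ℕ) : Set ℕ :=
  {z | Relation.ReflTransGen (pstep m g r) i z}

/-- `A i`: the set of nodes in the tree rooted at `i`,
i.e. all `z ∈ M` having `i` as an ancestor (or equal to `i`). -/
def A (m : ℕ) (g r : ℕ → ℝ) (i : ℕ) : Set ℕ :=
  {z | 1 ≤ z ∧ z ≤ m ∧ i ∈ P m g r z}

/-- `v i`: the lowest-indexed node in the tree rooted at `i`. -/
def v (m : ℕ) (g r : ℕ → ℝ) (i : ℕ) : ℕ := sInf (A m g r i)

/-- `y i`: the younger siblings of `i` (same parent status, smaller index). -/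
def y (m : ℕ) (g r : ℕ → ℝ) (i : ℕ) : Set ℕ :=
  {z | 1 ≤ z ∧ z ≤ m ∧ z < i ∧ p m g r z = p m g r i}

/-- `esib i`: the elder siblings of `i`. -/
def esib (m : ℕ) (g r : ℕ → ℝ) (i : ℕ) : Set ℕ :=
  {z | 1 ≤ z ∧ z ≤ m ∧ i < z ∧ p m g r z = p m g r i}

/-- `T k := {k} ∪ ⋃_{z ∈ P(k)} y(z)`. -/
def T (m : ℕ) (g r : ℕ → ℝ) (k : ℕ) : Set ℕ :=
  {k} ∪ ⋃ z ∈ P m g r k, y m g r z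

/-- `T k` as a `Finset` (all relevant nodes lie in `{k} ∪ [1, m]`). -/
def TIcc (m : ℕ) (g r : ℕ → ℝ) (k : ℕ) : Finset ℕ :=
  (insert k (Finset.Icc 1 m)).filter (fun z => z ∈ T m g r k)

end

end BSHM

namespace BSHM

lemma pstep_lt {m : ℕ} {g r : ℕ → ℝ} {a b : ℕ} (h : pstep m g r a b) : a < b := by
  obtain ⟨hdef, hb⟩ := h
  have := Nat.sInf_mem hdef
  rw [hb]
  exact this.2.1

lemma P_ge {m : ℕ} {g r : ℕ → ℝ} {i z : ℕ} (h : z ∈ P m g r i) : i ≤ z := by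
  induction h with
  | refl => exact le_refl i
  | tail _ hstep ih => exact ih.trans (pstep_lt hstep).le

/-- Key climbing lemma: if `z < w < p z` and `w ≤ m`, then `p z` is an
ancestor of `w`. -/
lemma climb {m : ℕ} {g r : ℕ → ℝ} {z : ℕ} (hz : pdef m g r z) :
    ∀ n w, p m g r z - w ≤ n → z < w → w < p m g r z → w ≤ m →
      p m g r z ∈ P m g r w := by
  have hu : p m g r z ∈ pset m g r z := Nat.sInf_mem hz
  intro n
  induction n with
  | zero =>
    intro w hle hzw hwu _
    omega
  | succ n ih =>
    intro w hle hzw hwu hwm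
    -- w is not in pset z (since w < sInf)
    have hwns : w ∉ pset m g r z := by
      intro hmem
      have := Nat.sInf_le hmem
      change p m g r z ≤ w at this
      omega
    have hratio : r z / g z ≤ r w / g w := by
      by_contra hcon
      exact hwns ⟨hwm, hzw, lt_of_not_ge hcon⟩
    have hmemw : p m g r z ∈ pset m g r w :=
      ⟨hu.1, hwu, lt_of_lt_of_le hu.2.2 hratio⟩
    have hdw : pdef m g r w := ⟨_, hmemw⟩
    have hple : p m g r w ≤ p m g r z := Nat.sInf_le hmemw
    have hwp : w < p m g r w := (Nat.sInf_mem hdw).2.1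
    rcases eq_or_lt_of_le hple with heq | hlt
    · have : pstep m g r w (p m g r z) := ⟨hdw, heq.symm⟩
      exact Relation.ReflTransGen.single this
    · have hpm : p m g r w ≤ m := (Nat.sInf_mem hdw).1
      have : p m g r z ∈ P m g r (p m g r w) :=
        ih (p m g r w) (by omega) (by omega) hlt hpm
      exact Relation.ReflTransGen.head ⟨hdw, rfl⟩ this

/-- If `k` is an ancestor of `z` and `z ≤ w ≤ k`, `w ≤ m`, then `k` is an
ancestor of `w`. -/
lemma ancestor_of_between {m : ℕ} {g r : ℕ → ℝ} {z k : ℕ}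
    (h : k ∈ P m g r z) :
    ∀ w, z ≤ w → w ≤ k → w ≤ m → k ∈ P m g r w := by
  induction h using Relation.ReflTransGen.head_induction_on with
  | refl =>
    intro w h1 h2 _
    have : w = k := le_antisymm h2 h1
    rw [this]
    exact Relation.ReflTransGen.refl
  | head hstep hrest ih =>
    rename_i a c
    intro w haw hwk hwm
    rcases eq_or_lt_of_le haw with heq | hlt
    · subst heq
      exact Relation.ReflTransGen.head hstep hrest
    · rcases lt_or_ge w c with hwc | hcw
      · -- z < w < c = p a : use climb
        have hc : c = p m g r a := hstep.2
        have hclimb : p m g r a ∈ P m g r w := by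
          refine climb hstep.1 (p m g r a - w) w le_rfl hlt ?_ hwm
          rw [← hc]; exact hwc
        rw [← hc] at hclimb
        exact hclimb.trans hrest
      · exact ih w hcw hwk hwm

/-- For every `k ∈ M`, `A k = {v k, v k + 1, …, k}`:
the node set of each subtree of the cost-per-capacity graph is a set of
consecutive indices whose maximum is the root `k`. -/
theorem statement_1 (m : ℕ) (g r : ℕ → ℝ)
    (hm : 1 ≤ m)
    (hg1 : 0 < g 1) (hr1 : 0 < r 1)
    (hg : ∀ i j, 1 ≤ i → i < j → j ≤ m → g i < g j)
    (hr : ∀ i j, 1 ≤ i → i < j → j ≤ m → r i < r j) :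
    ∀ k, 1 ≤ k → k ≤ m → A m g r k = Set.Icc (v m g r k) k := by
  intro k hk1 hkm
  have hkA : k ∈ A m g r k := ⟨hk1, hkm, Relation.ReflTransGen.refl⟩
  have hvA : v m g r k ∈ A m g r k := Nat.sInf_mem ⟨k, hkA⟩
  have hvk : v m g r k ≤ k := Nat.sInf_le hkA
  ext z
  constructor
  · intro hz
    exact ⟨Nat.sInf_le hz, P_ge hz.2.2⟩
  · rintro ⟨h1, h2⟩
    have hzm : z ≤ m := h2.trans hkm
    have hz1 : 1 ≤ z := hvA.1.trans h1
    exact ⟨hz1, hzm, ancestor_of_between hvA.2.2 z h1 h2 hzm⟩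

end BSHM
end

section
/- For every k ∈ M and all y1, y2 ∈ T(k) with y1 ≤ y2, one has r(y1)/g(y1) ≤ r(y2)/g(y2); that is, along the nodes of T(k) the normalized cost rate per capacity unit is non-decreasing in the index. -/
open scoped Classical
open Finset MeasureTheory

namespace BSHM

lemma pdef_of_ne_zero (m : ℕ) (g r : ℕ → ℝ) {i : ℕ} (h : p m g r i ≠ 0) :
    pdef m g r i := by
  by_contra hc
  rw [pdef, Set.not_nonempty_iff_eq_empty] at hc
  simp [p, hc] at h

lemma p_mem (m : ℕ) (g r : ℕ → ℝ) {i : ℕ} (h : pdef m g r i) :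
    p m g r i ∈ pset m g r i := Nat.sInf_mem h

lemma reach_le (m : ℕ) (g r : ℕ → ℝ) {i j : ℕ}
    (h : Relation.ReflTransGen (pstep m g r) i j) : i ≤ j := by
  induction h with
  | refl => exact le_rfl
  | tail _ hbc ih =>
    obtain ⟨hd, rfl⟩ := hbc
    exact ih.trans (le_of_lt (p_mem m g r hd).2.1)

lemma pstep_rightUnique (m : ℕ) (g r : ℕ → ℝ) :
    Relator.RightUnique (pstep m g r) := by
  intro a b c hb hc
  rw [hb.2, hc.2]

/-- Key lemma: no younger sibling `b` of `z` can satisfy `c ≤ b` for a node `c`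
from which `z` is reachable by the parent relation. -/
lemma keyK (m : ℕ) (g r : ℕ → ℝ) {b z : ℕ} (hbm : b ≤ m) (hbz : b < z)
    (hpb : p m g r b = p m g r z) :
    ∀ {c : ℕ}, Relation.ReflTransGen (pstep m g r) c z → c ≤ b → False := by
  intro c h
  induction h using Relation.ReflTransGen.head_induction_on with
  | refl => omega
  | @head c d hstep hrest ih =>
    intro hcb
    obtain ⟨hdefc, rfl⟩ := hstep
    by_cases hdb : p m g r c ≤ b
    · exact ih hdb
    push_neg at hdb
    have hmemc := p_mem m g r hdefc
    have hdz : p m g r c ≤ z := reach_le m g r hrest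
    have hbc : c < b := by
      rcases lt_or_eq_of_le hcb with h | h
      · exact h
      · exfalso
        subst h
        -- p c = p z ≤ z, but p c ∈ pset c so p c ≥ 1, hence pdef z and p z > z
        have h1 : p m g r z ≠ 0 := by
          rw [← hpb]; omega
        have := (p_mem m g r (pdef_of_ne_zero m g r h1)).2.1
        omega
    -- ratio b ≥ ratio c
    have h1 : r c / g c ≤ r b / g b := by
      by_contra hcon
      push_neg at hcon
      have : b ∈ pset m g r c := ⟨hbm, hbc, hcon⟩
      have := Nat.sInf_le this
      rw [← p] at this
      omega
    -- ratio (p c) ≥ ratio b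
    have h2 : r b / g b ≤ r (p m g r c) / g (p m g r c) := by
      by_contra hcon
      push_neg at hcon
      have hmem : p m g r c ∈ pset m g r b := ⟨hmemc.1, hdb, hcon⟩
      have hle : p m g r b ≤ p m g r c := Nat.sInf_le hmem
      have hne : p m g r z ≠ 0 := by
        have : p m g r b ≠ 0 := by
          have := (p_mem m g r ⟨_, hmem⟩).2.1
          omega
        rwa [← hpb]
      have := (p_mem m g r (pdef_of_ne_zero m g r hne)).2.1
      omega
    have h3 : r (p m g r c) / g (p m g r c) < r c / g c := hmemc.2.2
    linarith

/-- For every `k ∈ M` and all `y1, y2 ∈ T(k)` with `y1 ≤ y2`,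
one has `r y1 / g y1 ≤ r y2 / g y2`: along the nodes of `T(k)` the normalized
cost rate per capacity unit is non-decreasing in the index. -/
theorem statement_2 (m : ℕ) (g r : ℕ → ℝ)
    (hm : 1 ≤ m)
    (hg1 : 0 < g 1) (hr1 : 0 < r 1)
    (hg : ∀ i j, 1 ≤ i → i < j → j ≤ m → g i < g j)
    (hr : ∀ i j, 1 ≤ i → i < j → j ≤ m → r i < r j) :
    ∀ k, 1 ≤ k → k ≤ m →
      ∀ y1 ∈ T m g r k, ∀ y2 ∈ T m g r k, y1 ≤ y2 →
        r y1 / g y1 ≤ r y2 / g y2 := by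
  intro k hk1 hkm y1 hy1 y2 hy2 hle
  rcases eq_or_lt_of_le hle with rfl | hlt
  · exact le_rfl
  by_contra hcon
  push_neg at hcon
  -- unpack membership of y1
  have hy1' : y1 = k ∨ ∃ z ∈ P m g r k, y1 ∈ y m g r z := by
    simpa [T, Set.mem_union, Set.mem_iUnion] using hy1
  have hy2' : y2 = k ∨ ∃ z ∈ P m g r k, y2 ∈ y m g r z := by
    simpa [T, Set.mem_union, Set.mem_iUnion] using hy2
  -- get a chain node za ≥ y1 with p y1 = p za
  obtain ⟨za, hza, hy1za, hpa, h1m⟩ :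
      ∃ za, za ∈ P m g r k ∧ y1 ≤ za ∧ p m g r y1 = p m g r za ∧ y1 ≤ m := by
    rcases hy1' with rfl | ⟨z, hz, hmem⟩
    · exact ⟨y1, Relation.ReflTransGen.refl, le_rfl, rfl, hkm⟩
    · exact ⟨z, hz, le_of_lt hmem.2.2.1, hmem.2.2.2, hmem.2.1⟩
  have h2m : y2 ≤ m := by
    rcases hy2' with rfl | ⟨z, hz, hmem⟩
    · exact hkm
    · exact hmem.2.1
  -- y2 is a candidate parent of y1
  have hbps : y2 ∈ pset m g r y1 := ⟨h2m, hlt, hcon⟩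
  have hcle : p m g r y1 ≤ y2 := Nat.sInf_le hbps
  have hcps : p m g r y1 ∈ pset m g r y1 := p_mem m g r ⟨_, hbps⟩
  -- c := p y1 = p za is a chain node
  have hdefza : pdef m g r za := by
    apply pdef_of_ne_zero
    rw [← hpa]
    have := hcps.2.1
    omega
  have hczP : Relation.ReflTransGen (pstep m g r) k (p m g r y1) := by
    rw [hpa]
    exact hza.tail ⟨hdefza, rfl⟩
  have hzagt : za < p m g r y1 := by
    have := (p_mem m g r hdefza).2.1
    omega
  have hkza : k ≤ za := reach_le m g r hza
  rcases hy2' with rfl | ⟨zb, hzb, hmemb⟩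
  · -- y2 = k : p y1 ≤ k but p y1 > za ≥ k
    omega
  · -- y2 is a younger sibling of chain node zb
    rcases Relation.ReflTransGen.total_of_right_unique
        (pstep_rightUnique m g r) hczP hzb with hcz | hzc
    · exact keyK m g r hmemb.2.1 hmemb.2.2.1 hmemb.2.2.2 hcz hcle
    · have := reach_le m g r hzc
      have := hmemb.2.2.1
      omega

end BSHM
end

section
/- For every k ∈ M, the family {A_z : z ∈ T(k)} is a partition of {1, 2, …, k}: the sets A_z for z ∈ T(k) are pairwise disjoint and their union equals {1, 2, …, k}. Moreover, writing T(k) = {i_1, i_2, …, i_n} with i_1 < i_2 < … < i_n, one has i_q = v(i_{q+1}) − 1 for every q = 1, 2, …, n−1. -/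
open scoped Classical
open Finset MeasureTheory

namespace BSHM

private lemma P_char_rev {m : ℕ} {g r : ℕ → ℝ} :
    ∀ n z j : ℕ, j - z ≤ n → z ≤ j → j ≤ m →
    (∀ w, z ≤ w → w < j → r j / g j < r w / g w) → j ∈ P m g r z := by
  intro n
  induction n with
  | zero =>
    intro z j h1 h2 _ _
    have : j = z := by omega
    subst this
    exact Relation.ReflTransGen.refl
  | succ n ih =>
    intro z j h1 h2 h3 hcond
    rcases eq_or_lt_of_le h2 with rfl | hzj
    · exact Relation.ReflTransGen.refl
    · have hjz : j ∈ pset m g r z := ⟨h3, hzj, hcond z le_rfl hzj⟩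
      have hdef : pdef m g r z := ⟨j, hjz⟩
      have hq : p m g r z ∈ pset m g r z := Nat.sInf_mem hdef
      have hqj : p m g r z ≤ j := Nat.sInf_le hjz
      obtain ⟨hqm, hzq, _⟩ := hq
      refine Relation.ReflTransGen.head ⟨hdef, rfl⟩
        (ih (p m g r z) j (by omega) hqj h3 ?_)
      exact fun w hw hw' => hcond w (hzq.le.trans hw) hw'

private lemma P_char {m : ℕ} {g r : ℕ → ℝ} {z j : ℕ} (hzm : z ≤ m) :
    j ∈ P m g r z ↔ z ≤ j ∧ j ≤ m ∧
      ∀ w, z ≤ w → w < j → r j / g j < r w / g w := by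
  constructor
  · intro hj
    have hj' : Relation.ReflTransGen (pstep m g r) z j := hj
    induction hj' with
    | refl => exact ⟨le_rfl, hzm, fun w hw hw' => absurd hw' (not_lt.mpr hw)⟩
    | @tail b c hb hstep ih =>
      obtain ⟨hzb, hbm, hcond⟩ := ih hb
      obtain ⟨hbdef, rfl⟩ := hstep
      have hpc : p m g r b ∈ pset m g r b := Nat.sInf_mem hbdef
      obtain ⟨hcm, hbc, hsc⟩ := hpc
      refine ⟨hzb.trans hbc.le, hcm, fun w hzw hwc => ?_⟩
      rcases lt_trichotomy w b with hwb | rfl | hbw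
      · exact hsc.trans (hcond w hzw hwb)
      · exact hsc
      · have hnw : ¬ (r w / g w < r b / g b) := by
          intro h
          have : w ∈ pset m g r b := ⟨hwc.le.trans hcm, hbw, h⟩
          exact absurd (Nat.sInf_le this) (not_le.mpr hwc)
        exact hsc.trans_le (le_of_not_gt hnw)
  · rintro ⟨h1, h2, h3⟩
    exact P_char_rev j z j (Nat.sub_le _ _) h1 h2 h3

private lemma A_char {m : ℕ} {g r : ℕ → ℝ} {i : ℕ} (hi1 : 1 ≤ i) (him : i ≤ m)
    {z : ℕ} :
    z ∈ A m g r i ↔ 1 ≤ z ∧ z ≤ i ∧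
      ∀ w, z ≤ w → w < i → r i / g i < r w / g w := by
  constructor
  · rintro ⟨h1, h2, h3⟩
    rw [P_char h2] at h3
    exact ⟨h1, h3.1, h3.2.2⟩
  · rintro ⟨h1, h2, h3⟩
    exact ⟨h1, h2.trans him, (P_char (h2.trans him)).mpr ⟨h2, him, h3⟩⟩

private lemma sib_not_lt {m : ℕ} {g r : ℕ → ℝ} {i z w : ℕ} (hi1 : 1 ≤ i)
    (hpz : p m g r i = p m g r z)
    (hiw : i < w) (hwm : w ≤ m) (hwz : w ≤ z) :
    ¬ (r w / g w < r i / g i) := by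
  intro h
  have hw : w ∈ pset m g r i := ⟨hwm, hiw, h⟩
  have hle : p m g r i ≤ w := Nat.sInf_le hw
  by_cases hz : pdef m g r z
  · have h2 : z < p m g r z := (Nat.sInf_mem hz).2.1
    omega
  · have h0 : p m g r z = 0 := by
      have he : pset m g r z = ∅ := Set.not_nonempty_iff_eq_empty.mp hz
      simp [p, he]
    have hmem : p m g r i ∈ pset m g r i := Nat.sInf_mem ⟨w, hw⟩
    have h3 : i < p m g r i := hmem.2.1
    omega

private lemma T_char {m : ℕ} {g r : ℕ → ℝ} {k : ℕ} (hk1 : 1 ≤ k) (hkm : k ≤ m)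
    {i : ℕ} :
    i ∈ T m g r k ↔ 1 ≤ i ∧ i ≤ k ∧
      ∀ w, i < w → w ≤ k → r i / g i ≤ r w / g w := by
  constructor
  · intro hi
    simp only [T, Set.mem_union, Set.mem_singleton_iff, Set.mem_iUnion] at hi
    rcases hi with rfl | ⟨z, hz, hy⟩
    · exact ⟨hk1, le_rfl, fun w hw hw' => absurd hw' (not_le.mpr hw)⟩
    · obtain ⟨hi1, him, hiz, hpz⟩ := hy
      rw [P_char hkm] at hz
      obtain ⟨hkz, hzm, hchain⟩ := hz
      have hik : i < k := by
        by_contra hle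
        push_neg at hle
        exact sib_not_lt hi1 hpz hiz hzm le_rfl (hchain i hle hiz)
      exact ⟨hi1, hik.le, fun w hw hw' =>
        le_of_not_gt (sib_not_lt hi1 hpz hw (hw'.trans hkm) (hw'.trans hkz))⟩
  · rintro ⟨hi1, hik, hcond⟩
    simp only [T, Set.mem_union, Set.mem_singleton_iff, Set.mem_iUnion]
    rcases eq_or_lt_of_le hik with rfl | hik'
    · exact Or.inl rfl
    right
    by_cases hdef : pdef m g r i
    · set q := p m g r i with hqdef
      have hq : q ∈ pset m g r i := Nat.sInf_mem hdef
      obtain ⟨hqm, hiq, hsq⟩ := hq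
      have hkq : k < q := by
        by_contra h
        push_neg at h
        exact absurd hsq (not_lt.mpr (hcond q hiq h))
      classical
      set F : Finset ℕ := (Finset.Icc k m).filter
        (fun j => j ∈ P m g r k ∧ j < q) with hF
      have hkF : k ∈ F := Finset.mem_filter.mpr
        ⟨Finset.mem_Icc.mpr ⟨le_rfl, hkm⟩, Relation.ReflTransGen.refl, hkq⟩
      have hFne : F.Nonempty := ⟨k, hkF⟩
      have hzF := F.max'_mem hFne
      set z := F.max' hFne with hzdef'
      rw [hF, Finset.mem_filter, Finset.mem_Icc] at hzF
      obtain ⟨⟨hkz, hzm⟩, hzP, hzq⟩ := hzF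
      have hiz : i < z := hik'.trans_le hkz
      have hsz : ¬ (r z / g z < r i / g i) := by
        intro h
        have hmem : z ∈ pset m g r i := ⟨hzm, hiz, h⟩
        exact absurd (Nat.sInf_le hmem) (not_le.mpr hzq)
      have hqz : q ∈ pset m g r z := ⟨hqm, hzq, hsq.trans_le (le_of_not_gt hsz)⟩
      have hzdef : pdef m g r z := ⟨q, hqz⟩
      have hpzq : p m g r z = q := by
        have h1 : p m g r z ≤ q := Nat.sInf_le hqz
        rcases eq_or_lt_of_le h1 with h | h
        · exact h
        · exfalso
          have hpz : p m g r z ∈ pset m g r z := Nat.sInf_mem hzdef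
          have hPk : p m g r z ∈ P m g r k :=
            Relation.ReflTransGen.tail hzP ⟨hzdef, rfl⟩
          have hmemF : p m g r z ∈ F := Finset.mem_filter.mpr
            ⟨Finset.mem_Icc.mpr ⟨hkz.trans hpz.2.1.le, hpz.1⟩, hPk, h⟩
          exact absurd (Finset.le_max' F _ hmemF) (not_le.mpr hpz.2.1)
      exact ⟨z, hzP, hi1, hik.trans hkm, hiz, hpzq.symm⟩
    · classical
      set F : Finset ℕ := (Finset.Icc k m).filter (fun j => j ∈ P m g r k) with hF
      have hkF : k ∈ F := Finset.mem_filter.mpr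
        ⟨Finset.mem_Icc.mpr ⟨le_rfl, hkm⟩, Relation.ReflTransGen.refl⟩
      have hFne : F.Nonempty := ⟨k, hkF⟩
      have hzF := F.max'_mem hFne
      set z := F.max' hFne with hzdef'
      rw [hF, Finset.mem_filter, Finset.mem_Icc] at hzF
      obtain ⟨⟨hkz, hzm⟩, hzP⟩ := hzF
      have hznd : ¬ pdef m g r z := by
        intro hd
        have hpz := Nat.sInf_mem hd
        have hPk : p m g r z ∈ P m g r k :=
          Relation.ReflTransGen.tail hzP ⟨hd, rfl⟩
        have hmemF : p m g r z ∈ F := Finset.mem_filter.mpr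
          ⟨Finset.mem_Icc.mpr ⟨hkz.trans hpz.2.1.le, hpz.1⟩, hPk⟩
        exact absurd (Finset.le_max' F _ hmemF) (not_le.mpr hpz.2.1)
      have e1 : p m g r i = 0 := by
        have he : pset m g r i = ∅ := Set.not_nonempty_iff_eq_empty.mp hdef
        simp [p, he]
      have e2 : p m g r z = 0 := by
        have he : pset m g r z = ∅ := Set.not_nonempty_iff_eq_empty.mp hznd
        simp [p, he]
      exact ⟨z, hzP, hi1, hik.trans hkm, hik'.trans_le hkz, e1.trans e2.symm⟩

/-- For every `k ∈ M`, the family `{A z : z ∈ T(k)}` is a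
partition of `{1, …, k}`: the sets are pairwise disjoint and their union is
`{1, …, k}`.  Moreover, consecutive elements `i < j` of `T(k)` (no element of
`T(k)` lies strictly between them) satisfy `i = v j − 1`. -/

theorem statement_3 (m : ℕ) (g r : ℕ → ℝ)
    (hm : 1 ≤ m)
    (hg1 : 0 < g 1) (hr1 : 0 < r 1)
    (hg : ∀ i j, 1 ≤ i → i < j → j ≤ m → g i < g j)
    (hr : ∀ i j, 1 ≤ i → i < j → j ≤ m → r i < r j) :
    ∀ k, 1 ≤ k → k ≤ m →
      ((∀ z1 ∈ T m g r k, ∀ z2 ∈ T m g r k, z1 ≠ z2 →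
          A m g r z1 ∩ A m g r z2 = ∅) ∧
       (⋃ z ∈ T m g r k, A m g r z) = Set.Icc 1 k ∧
       (∀ i ∈ T m g r k, ∀ j ∈ T m g r k, i < j →
          (∀ z ∈ T m g r k, ¬ (i < z ∧ z < j)) → i = v m g r j - 1)) := by
  intro k hk1 hkm
  have key : ∀ z1 ∈ T m g r k, ∀ z2 ∈ T m g r k, z1 < z2 →
      ∀ x, x ∈ A m g r z1 → x ∈ A m g r z2 → False := by
    intro z1 hz1 z2 hz2 hlt x hx1 hx2
    obtain ⟨h11, h12, h13⟩ := (T_char hk1 hkm).mp hz1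
    obtain ⟨h21, h22, h23⟩ := (T_char hk1 hkm).mp hz2
    rw [A_char h11 (h12.trans hkm)] at hx1
    rw [A_char h21 (h22.trans hkm)] at hx2
    have h1 := hx2.2.2 z1 hx1.2.1 hlt
    have h2 := h13 z2 hlt h22
    exact absurd h1 (not_lt.mpr h2)
  refine ⟨?_, ?_, ?_⟩
  · intro z1 hz1 z2 hz2 hne
    rw [Set.eq_empty_iff_forall_notMem]
    rintro x ⟨hx1, hx2⟩
    rcases hne.lt_or_gt with h | h
    · exact key z1 hz1 z2 hz2 h x hx1 hx2
    · exact key z2 hz2 z1 hz1 h x hx2 hx1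
  · apply Set.eq_of_subset_of_subset
    · intro x hx
      obtain ⟨z, hz, hxz⟩ := Set.mem_iUnion₂.mp hx
      obtain ⟨h1, h2, _⟩ := (T_char hk1 hkm).mp hz
      rw [A_char h1 (h2.trans hkm)] at hxz
      exact Set.mem_Icc.mpr ⟨hxz.1, hxz.2.1.trans h2⟩
    · intro x hx
      obtain ⟨hx1, hxk⟩ := Set.mem_Icc.mp hx
      classical
      set B : Finset ℕ := (Finset.Icc x k).filter
        (fun j => ∀ w, x ≤ w → w < j → r j / g j < r w / g w) with hB
      have hxB : x ∈ B := Finset.mem_filter.mpr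
        ⟨Finset.mem_Icc.mpr ⟨le_rfl, hxk⟩,
         fun w hw hw' => absurd hw' (not_lt.mpr hw)⟩
      have hBne : B.Nonempty := ⟨x, hxB⟩
      have hiB := B.max'_mem hBne
      set i := B.max' hBne with hidef
      rw [hB, Finset.mem_filter, Finset.mem_Icc] at hiB
      obtain ⟨⟨hxi, hik⟩, hicond⟩ := hiB
      have hi1 : 1 ≤ i := hx1.trans hxi
      have hiT : i ∈ T m g r k := by
        rw [T_char hk1 hkm]
        refine ⟨hi1, hik, fun w hw hw' => ?_⟩
        by_contra hlt
        push_neg at hlt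
        set C : Finset ℕ := (Finset.Ioc i k).filter
          (fun u => r u / g u < r i / g i) with hC
        have hwC : w ∈ C := Finset.mem_filter.mpr
          ⟨Finset.mem_Ioc.mpr ⟨hw, hw'⟩, hlt⟩
        have hCne : C.Nonempty := ⟨w, hwC⟩
        have hw0C := C.min'_mem hCne
        set w0 := C.min' hCne with hw0def
        rw [hC, Finset.mem_filter, Finset.mem_Ioc] at hw0C
        obtain ⟨⟨hiw0, hw0k⟩, hsw0⟩ := hw0C
        have hw0B : w0 ∈ B := by
          rw [hB, Finset.mem_filter, Finset.mem_Icc]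
          refine ⟨⟨hxi.trans hiw0.le, hw0k⟩, fun u hu hu' => ?_⟩
          rcases lt_trichotomy u i with h | rfl | h
          · exact hsw0.trans (hicond u hu h)
          · exact hsw0
          · have huC : u ∉ C := fun hc =>
              absurd (Finset.min'_le C u hc) (not_le.mpr hu')
            have hnu : ¬ (r u / g u < r i / g i) := fun hcc =>
              huC (Finset.mem_filter.mpr
                ⟨Finset.mem_Ioc.mpr ⟨h, hu'.le.trans hw0k⟩, hcc⟩)
            exact hsw0.trans_le (le_of_not_gt hnu)
        exact absurd (Finset.le_max' B w0 hw0B) (not_le.mpr hiw0)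
      refine Set.mem_iUnion₂.mpr ⟨i, hiT, ?_⟩
      rw [A_char hi1 (hik.trans hkm)]
      exact ⟨hx1, hxi, hicond⟩
  · intro i hiT j hjT hij hgap
    obtain ⟨hi1, hik, hicond⟩ := (T_char hk1 hkm).mp hiT
    obtain ⟨hj1, hjk, hjcond⟩ := (T_char hk1 hkm).mp hjT
    have hjm : j ≤ m := hjk.trans hkm
    have hmem : i + 1 ∈ A m g r j := by
      rw [A_char hj1 hjm]
      refine ⟨by omega, hij, fun w hw hw' => ?_⟩
      by_contra hle
      push_neg at hle
      classical
      set B : Finset ℕ := (Finset.Ioo i j).filter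
        (fun u => r u / g u ≤ r j / g j) with hB
      have hwB : w ∈ B := Finset.mem_filter.mpr
        ⟨Finset.mem_Ioo.mpr ⟨by omega, hw'⟩, hle⟩
      have hBne : B.Nonempty := ⟨w, hwB⟩
      have hw0B := B.max'_mem hBne
      set w0 := B.max' hBne with hw0def
      rw [hB, Finset.mem_filter, Finset.mem_Ioo] at hw0B
      obtain ⟨⟨hiw0, hw0j⟩, hw0le⟩ := hw0B
      have hw0T : w0 ∈ T m g r k := by
        rw [T_char hk1 hkm]
        refine ⟨by omega, hw0j.le.trans hjk, fun u hu hu' => ?_⟩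
        rcases lt_trichotomy u j with h | rfl | h
        · have huB : u ∉ B := fun hc =>
            absurd (Finset.le_max' B u hc) (not_le.mpr hu)
          have hnu : ¬ (r u / g u ≤ r j / g j) := fun hcc =>
            huB (Finset.mem_filter.mpr
              ⟨Finset.mem_Ioo.mpr ⟨hiw0.trans hu, h⟩, hcc⟩)
          exact hw0le.trans (not_le.mp hnu).le
        · exact hw0le
        · exact hw0le.trans (hjcond u h hu')
      exact hgap w0 hw0T ⟨hiw0, hw0j⟩
    have hnot : ∀ x, x ∈ A m g r j → i < x := by
      intro x hx
      rw [A_char hj1 hjm] at hx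
      by_contra hle
      push_neg at hle
      have h1 := hx.2.2 i hle hij
      have h2 := hicond j hij hjk
      exact absurd h1 (not_lt.mpr h2)
    have h1 : v m g r j ≤ i + 1 := Nat.sInf_le hmem
    have h2 : v m g r j ∈ A m g r j := Nat.sInf_mem ⟨i + 1, hmem⟩
    have h3 := hnot _ h2
    omega

end BSHM
end

section
/- For every k ∈ M, k = max T(k); that is, k is the largest index among the nodes of T(k). -/
open scoped Classical
open Finset MeasureTheory

namespace BSHM

lemma pmem {m : ℕ} {g r : ℕ → ℝ} {a : ℕ} (h : pdef m g r a) :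
    p m g r a ∈ pset m g r a := Nat.sInf_mem h

lemma P_le_m {m k : ℕ} {g r : ℕ → ℝ} (hkm : k ≤ m) :
    ∀ z, z ∈ P m g r k → z ≤ m := by
  intro z hz
  induction hz with
  | refl => exact hkm
  | tail hw hstep ih => exact hstep.2 ▸ (pmem hstep.1).1

lemma ratio_lt {m k : ℕ} {g r : ℕ → ℝ} :
    ∀ z, z ∈ P m g r k → ∀ x, k < x → x < z → r z / g z < r x / g x := by
  intro z hz
  induction hz with
  | refl => intro x h1 h2; omega
  | @tail w z hw hstep ih =>
    intro x hkx hxz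
    have hwz : z ∈ pset m g r w := hstep.2 ▸ Nat.sInf_mem hstep.1
    rcases lt_trichotomy x w with h | h | h
    · exact lt_trans hwz.2.2 (ih x hkx h)
    · exact h ▸ hwz.2.2
    · have hxm : x ≤ m := le_trans (le_of_lt hxz) hwz.1
      have hnot : x ∉ pset m g r w := by
        intro hx
        have : z ≤ x := hstep.2 ▸ Nat.sInf_le hx
        omega
      have hge : ¬ (r x / g x < r w / g w) := fun hlt => hnot ⟨hxm, h, hlt⟩
      exact lt_of_lt_of_le hwz.2.2 (not_lt.mp hge)

/-- For every `k ∈ M`, `k = max T(k)`: `k` is the largest index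
among the nodes of `T(k)`. -/
theorem statement_5 (m : ℕ) (g r : ℕ → ℝ)
    (hm : 1 ≤ m)
    (hg1 : 0 < g 1) (hr1 : 0 < r 1)
    (hg : ∀ i j, 1 ≤ i → i < j → j ≤ m → g i < g j)
    (hr : ∀ i j, 1 ≤ i → i < j → j ≤ m → r i < r j) :
    ∀ k, 1 ≤ k → k ≤ m → IsGreatest (T m g r k) k := by
  intro k hk1 hkm
  constructor
  · exact Or.inl rfl
  · intro x hx
    rcases hx with hx | hx
    · exact le_of_eq hx
    · simp only [Set.mem_iUnion] at hx
      obtain ⟨z, hzP, hx1, hxm, hxz, hpx⟩ := hx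
      by_contra hcon
      push_neg at hcon
      have hzm : z ≤ m := P_le_m hkm z hzP
      have hρ : r z / g z < r x / g x := ratio_lt z hzP x hcon hxz
      have hzpx : z ∈ pset m g r x := ⟨hzm, hxz, hρ⟩
      have hdx : pdef m g r x := ⟨z, hzpx⟩
      have hxpx : x < p m g r x := (pmem hdx).2.1
      have hpxz : p m g r x ≤ z := Nat.sInf_le hzpx
      by_cases hdz : pdef m g r z
      · have : z < p m g r z := (pmem hdz).2.1
        omega
      · have : pset m g r z = ∅ := Set.not_nonempty_iff_eq_empty.mp hdz
        have hz0 : p m g r z = 0 := by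
          simp [p, this]
        omega

end BSHM
end

section
/- There exists a feasible machine configuration w* of minimum cost satisfying all of the following: (1) k_opt := max{z ∈ M : w*(z) > 0} ∈ P(k0); (2) for every z0 ∈ M, ∑_{z ∈ A_{z0}\{z0}} w*(z)·r(z) < r(z0); (3) ⌊S(H_{k_opt})/g(k_opt)⌋ ≤ w*(k_opt) ≤ ⌈S(H_{k_opt})/g(k_opt)⌉. -/
open scoped Classical
open Finset MeasureTheory

namespace BSHM

noncomputable section

/-! ### Jobs and one-shot scheduling -/

variable {ι : Type*}

/-- The exact machine type of a job `J`: the least `z ∈ M` with `s J ≤ g z`. -/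
def mty (m : ℕ) (g : ℕ → ℝ) (s : ι → ℝ) (J : ι) : ℕ :=
  sInf {z | 1 ≤ z ∧ z ≤ m ∧ s J ≤ g z}

/-- Total size of a finite set of jobs. -/
def Ssum (s : ι → ℝ) (W : Finset ι) : ℝ := ∑ J ∈ W, s J

/-- `k0f X`: the highest-indexed exact machine type among the jobs of `X`. -/
def k0f (m : ℕ) (g : ℕ → ℝ) (s : ι → ℝ) (X : Finset ι) : ℕ :=
  X.sup (fun J => mty m g s J)

/-- `H z X`: the jobs of `X` whose exact machine type lies in the tree rooted at `z`. -/
def H (m : ℕ) (g r : ℕ → ℝ) (s : ι → ℝ) (z : ℕ) (X : Finset ι) : Finset ι :=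
  X.filter (fun J => mty m g s J ∈ A m g r z)

/-- `SH X z := S(H_z(X))`. -/
def SH (m : ℕ) (g r : ℕ → ℝ) (s : ι → ℝ) (X : Finset ι) (z : ℕ) : ℝ :=
  Ssum s (H m g r s z X)

/-- Feasibility of a machine configuration `w : M → ℕ` for the job set `X`. -/
def Feasible (m : ℕ) (g : ℕ → ℝ) (s : ι → ℝ) (X : Finset ι) (w : ℕ → ℕ) : Prop :=
  ∀ i, 1 ≤ i → i ≤ m →
    Ssum s (X.filter (fun J => i ≤ mty m g s J)) ≤ ∑ z ∈ Finset.Icc i m, (w z : ℝ) * g z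

/-- The cost of a machine configuration. -/
def cost (m : ℕ) (r : ℕ → ℝ) (w : ℕ → ℕ) : ℝ :=
  ∑ z ∈ Finset.Icc 1 m, (w z : ℝ) * r z

/-- The optimal one-shot scheduling cost for a job set `X`. -/
def OPT1 (m : ℕ) (g r : ℕ → ℝ) (s : ι → ℝ) (X : Finset ι) : ℝ :=
  sInf {c : ℝ | ∃ w : ℕ → ℕ, Feasible m g s X w ∧ c = cost m r w}

/-- The fractional machine configuration `cn_{z*}` for the job set `X`, with
highest-indexed machine type `zs`.  A node `i ∈ T(zs) \ {zs}` is the boundary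
type `i*` exactly when `∑_{z ∈ T(zs), z > i} S(H_z) ≤ cn(zs)·g(zs) <
∑_{z ∈ T(zs), z ≥ i} S(H_z)`; nodes above the boundary get `0`,
nodes below it get `S(H_i)/g_i`. -/
def cn (m : ℕ) (g r : ℕ → ℝ) (s : ι → ℝ) (X : Finset ι) (zs i : ℕ) : ℝ :=
  let B : ℝ := (⌈SH m g r s X zs / g zs⌉₊ : ℝ) * g zs
  let Sge : ℝ := ∑ z ∈ (TIcc m g r zs).filter (fun z => i ≤ z), SH m g r s X z
  let Sgt : ℝ := ∑ z ∈ (TIcc m g r zs).filter (fun z => i < z), SH m g r s X z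
  if i = zs then (⌈SH m g r s X zs / g zs⌉₊ : ℝ)
  else if i ∈ T m g r zs then
    (if Sgt ≤ B ∧ B < Sge then (Sge - B) / g i
     else if B < Sgt then SH m g r s X i / g i
     else 0)
  else 0

/-- `cn_{zs}` is decent: for every strict ancestor `zt` of `zs`, the total cost of
the machines of types in `T(zs) ∩ A(zt)` is at most the cost of one type-`zt` machine. -/
def decent (m : ℕ) (g r : ℕ → ℝ) (s : ι → ℝ) (X : Finset ι) (zs : ℕ) : Prop :=
  ∀ zt ∈ P m g r zs, zt ≠ zs →
    (∑ z ∈ (TIcc m g r zs).filter (fun z => z ∈ A m g r zt), cn m g r s X zs z * r z) ≤ r zt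

/-- `z⋄(X)`: the least `z* ∈ P(k0(X))` such that `cn_{z*}` is decent. -/
def zdia (m : ℕ) (g r : ℕ → ℝ) (s : ι → ℝ) (X : Finset ι) : ℕ :=
  sInf {zs | zs ∈ P m g r (k0f m g s X) ∧ decent m g r s X zs}

/-- The child of `zd` whose subtree contains node `k`. -/
def chil (m : ℕ) (g r : ℕ → ℝ) (zd k : ℕ) : ℕ :=
  sInf {i | p m g r i = zd ∧ k ∈ A m g r i}

/-- The node `i ∈ T(zd)` whose subtree contains node `k`. -/
def idxT (m : ℕ) (g r : ℕ → ℝ) (zd k : ℕ) : ℕ :=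
  sInf {i | i ∈ T m g r zd ∧ k ∈ A m g r i}

/-- The children `f(zd)` of node `zd`, as a `Finset`. -/
def fchFin (m : ℕ) (g r : ℕ → ℝ) (zd : ℕ) : Finset ℕ :=
  (Finset.Icc 1 m).filter (fun z => p m g r z = zd)

/-- The cost `r̃(X)(J)` charged to the job `J` of the job set `X`. -/
def charge (m : ℕ) (g r : ℕ → ℝ) (s : ι → ℝ) (X : Finset ι) (J : ι) : ℝ :=
  let zd := zdia m g r s X
  let ρ : ℕ → ℝ := fun i => r i / g i
  let Hh := X.filter (fun J' => mty m g s J' = zd)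
  let c : ℝ := Ssum s Hh * ρ zd + ∑ i ∈ fchFin m g r zd, SH m g r s X i * ρ i
  if mty m g s J ∈ A m g r zd then
    if g zd ≤ SH m g r s X zd then s J * ρ zd
    else if r zd < c then
      if mty m g s J = zd then s J * ρ zd
      else
        s J * (ρ (chil m g r zd (mty m g s J)) -
          (ρ (chil m g r zd (mty m g s J)) - ρ zd) *
            ((c - r zd) /
              (∑ i ∈ fchFin m g r zd, ∑ J' ∈ H m g r s i X, s J' * (ρ i - ρ zd))))
    else
      if mty m g s J = zd then s J * ρ zd * (1 + (r zd - c) / (Ssum s Hh * ρ zd))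
      else s J * ρ (chil m g r zd (mty m g s J))
  else s J * ρ (idxT m g r zd (mty m g s J))

end

end BSHM


namespace BSHM

section Struct

variable {m : ℕ} {g r : ℕ → ℝ}

lemma p_mem_pset {a : ℕ} (h : pdef m g r a) : p m g r a ∈ pset m g r a :=
  Nat.sInf_mem h

lemma pstep_spec {a b : ℕ} (h : pstep m g r a b) :
    b ≤ m ∧ a < b ∧ r b / g b < r a / g a := by
  obtain ⟨hd, rfl⟩ := h
  exact p_mem_pset hd

lemma chain_le {a b : ℕ} (h : Relation.ReflTransGen (pstep m g r) a b) : a ≤ b := by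
  induction h with
  | refl => exact le_rfl
  | tail hab hbc ih => exact le_trans ih (le_of_lt (pstep_spec hbc).2.1)

lemma chain_le_m {a b : ℕ} (h : Relation.ReflTransGen (pstep m g r) a b) (ha : a ≤ m) :
    b ≤ m := by
  induction h with
  | refl => exact ha
  | tail hab hbc ih => exact (pstep_spec hbc).1

lemma chain_rho_le {a b : ℕ} (h : Relation.ReflTransGen (pstep m g r) a b) :
    r b / g b ≤ r a / g a := by
  induction h with
  | refl => exact le_rfl
  | tail hab hbc ih => exact le_trans (le_of_lt (pstep_spec hbc).2.2) ih

lemma chain_rho_lt {a b : ℕ} (h : Relation.ReflTransGen (pstep m g r) a b) (hne : a ≠ b) :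
    r b / g b < r a / g a := by
  induction h with
  | refl => exact absurd rfl hne
  | tail hab hbc ih => exact lt_of_lt_of_le (pstep_spec hbc).2.2 (chain_rho_le hab)

lemma reach_of_between_step :
    ∀ d : ℕ, ∀ a t : ℕ, pdef m g r a → a < t → t < p m g r a → p m g r a - t ≤ d →
      Relation.ReflTransGen (pstep m g r) t (p m g r a) := by
  intro d
  induction d with
  | zero => intro a t hd hat htp hle; omega
  | succ d ih =>
      intro a t hd hat htp hle
      have hb := p_mem_pset hd
      have htm : t ≤ m := le_trans (le_of_lt htp) hb.1
      have htnot : t ∉ pset m g r a := fun hmem =>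
        absurd (Nat.sInf_le hmem : p m g r a ≤ t) (not_le.mpr htp)
      have hrho : ¬ (r t / g t < r a / g a) := fun hlt => htnot ⟨htm, hat, hlt⟩
      have hbt : p m g r a ∈ pset m g r t :=
        ⟨hb.1, htp, lt_of_lt_of_le hb.2.2 (le_of_not_gt hrho)⟩
      have hdt : pdef m g r t := ⟨_, hbt⟩
      have hct := p_mem_pset hdt
      have hcle : p m g r t ≤ p m g r a := Nat.sInf_le hbt
      rcases eq_or_lt_of_le hcle with heq | hlt'
      · exact Relation.ReflTransGen.single ⟨hdt, heq.symm⟩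
      · have htc : t < p m g r t := hct.2.1
        have harith : p m g r a - p m g r t ≤ d := by
          have e1 : p m g r a = sInf (pset m g r a) := rfl
          have e2 : p m g r t = sInf (pset m g r t) := rfl
          omega
        exact Relation.ReflTransGen.head ⟨hdt, rfl⟩
          (ih a (p m g r t) hd (lt_trans hat htc) hlt' harith)

lemma reach_of_between : ∀ {x y : ℕ}, Relation.ReflTransGen (pstep m g r) x y →
    ∀ z : ℕ, x ≤ z → z ≤ y → Relation.ReflTransGen (pstep m g r) z y := by
  intro x y h
  induction h using Relation.ReflTransGen.head_induction_on with
  | refl =>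
      intro z h1 h2
      have hzy : z = y := le_antisymm h2 h1
      subst hzy; exact Relation.ReflTransGen.refl
  | head hac hcy ih =>
      rename_i a c
      intro z haz hzy
      rcases le_or_gt c z with hcz | hzc
      · exact ih z hcz hzy
      · rcases eq_or_lt_of_le haz with rfl | haz'
        · exact Relation.ReflTransGen.head hac hcy
        · have hc : c = p m g r a := hac.2
          have : Relation.ReflTransGen (pstep m g r) z c := by
            rw [hc]
            exact reach_of_between_step (p m g r a - z) a z hac.1 haz' (hc ▸ hzc) le_rfl
          exact this.trans hcy

lemma A_nonempty {k : ℕ} (hk1 : 1 ≤ k) (hkm : k ≤ m) : (A m g r k).Nonempty :=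
  ⟨k, hk1, hkm, Relation.ReflTransGen.refl⟩

lemma v_mem_A {k : ℕ} (hk1 : 1 ≤ k) (hkm : k ≤ m) : v m g r k ∈ A m g r k :=
  Nat.sInf_mem (A_nonempty hk1 hkm)

lemma mem_A_iff {k : ℕ} (hk1 : 1 ≤ k) (hkm : k ≤ m) (z : ℕ) :
    z ∈ A m g r k ↔ v m g r k ≤ z ∧ z ≤ k := by
  have hv := v_mem_A (m := m) (g := g) (r := r) hk1 hkm
  constructor
  · intro hz
    exact ⟨Nat.sInf_le hz, chain_le hz.2.2⟩
  · rintro ⟨h1, h2⟩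
    exact ⟨le_trans hv.1 h1, le_trans h2 hkm, reach_of_between hv.2.2 z h1 h2⟩

lemma rpos (hr8 : ∀ z, 1 ≤ z → z ≤ m → ∃ n : ℤ, r z = (8 : ℝ) ^ n) {z : ℕ}
    (h1 : 1 ≤ z) (h2 : z ≤ m) : 0 < r z := by
  obtain ⟨n, hn⟩ := hr8 z h1 h2
  rw [hn]; positivity

lemma gpos (hg1 : 0 < g 1) (hg : ∀ i j, 1 ≤ i → i < j → j ≤ m → g i < g j) {z : ℕ}
    (h1 : 1 ≤ z) (h2 : z ≤ m) : 0 < g z := by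
  rcases eq_or_lt_of_le h1 with rfl | h
  · exact hg1
  · exact lt_trans hg1 (hg 1 z le_rfl h h2)

lemma ratio_nat (hr : ∀ i j, 1 ≤ i → i < j → j ≤ m → r i < r j)
    (hr8 : ∀ z, 1 ≤ z → z ≤ m → ∃ n : ℤ, r z = (8 : ℝ) ^ n) {a b : ℕ}
    (h1 : 1 ≤ a) (hab : a ≤ b) (hbm : b ≤ m) :
    ∃ n : ℕ, 1 ≤ n ∧ r b = (n : ℝ) * r a := by
  obtain ⟨α, hα⟩ := hr8 a h1 (le_trans hab hbm)
  obtain ⟨β, hβ⟩ := hr8 b (le_trans h1 hab) hbm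
  have hle : r a ≤ r b := by
    rcases eq_or_lt_of_le hab with rfl | h
    · exact le_rfl
    · exact (hr a b h1 h hbm).le
  have hαβ : α ≤ β := by
    by_contra hcon
    push_neg at hcon
    have : (8 : ℝ) ^ β < (8 : ℝ) ^ α := zpow_lt_zpow_right₀ (by norm_num) hcon
    rw [← hα, ← hβ] at this
    exact absurd hle (not_le.mpr this)
  refine ⟨8 ^ (β - α).toNat, Nat.one_le_pow _ _ (by norm_num), ?_⟩
  have : ((8 ^ (β - α).toNat : ℕ) : ℝ) = (8 : ℝ) ^ (β - α) := by
    push_cast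
    rw [← zpow_natCast]
    congr 1
    omega
  rw [hβ, hα, this, ← zpow_add₀ (by norm_num : (8:ℝ) ≠ 0)]
  congr 1
  ring

lemma ratio_nat2 (hr : ∀ i j, 1 ≤ i → i < j → j ≤ m → r i < r j)
    (hr8 : ∀ z, 1 ≤ z → z ≤ m → ∃ n : ℤ, r z = (8 : ℝ) ^ n) {a b : ℕ}
    (h1 : 1 ≤ a) (hab : a < b) (hbm : b ≤ m) :
    ∃ n : ℕ, 2 ≤ n ∧ r b = (n : ℝ) * r a := by
  obtain ⟨n, hn1, hn⟩ := ratio_nat hr hr8 h1 hab.le hbm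
  have hra : 0 < r a := rpos hr8 h1 (le_trans hab.le hbm)
  have hlt : r a < r b := hr a b h1 hab hbm
  refine ⟨n, ?_, hn⟩
  rcases Nat.lt_or_ge n 2 with h | h
  · exfalso
    have hn01 : n = 0 ∨ n = 1 := by omega
    rcases hn01 with rfl | rfl
    · rw [hn] at hlt; norm_num at hlt; nlinarith
    · rw [hn] at hlt; norm_num at hlt
  · exact h

end Struct

end BSHM

namespace BSHM

section Sums

lemma greedy (r' : ℕ → ℝ) :
    ∀ N : ℕ, ∀ (c : ℕ → ℕ) (F : Finset ℕ) (V : ℝ),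
      (∑ z ∈ F, c z) ≤ N →
      (∀ z ∈ F, c z ≠ 0 → 0 < r' z) →
      (∀ z ∈ F, c z ≠ 0 → ∃ n : ℕ, V = n * r' z) →
      (∀ z ∈ F, ∀ z' ∈ F, c z ≠ 0 → c z' ≠ 0 → r' z ≤ r' z' → ∃ n : ℕ, r' z' = n * r' z) →
      0 ≤ V → V ≤ ∑ z ∈ F, (c z : ℝ) * r' z →
      ∃ u : ℕ → ℕ, (∀ z, u z ≤ c z) ∧ (∀ z, z ∉ F → u z = 0) ∧
        ∑ z ∈ F, (u z : ℝ) * r' z = V := by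
  intro N
  induction N with
  | zero =>
      intro c F V hN hpos hdvd hpair hV0 hVle
      have hz : ∀ z ∈ F, c z = 0 := by
        intro z hzF
        have h0 : ∑ z ∈ F, c z = 0 := Nat.le_zero.mp hN
        exact (Finset.sum_eq_zero_iff.mp h0) z hzF
      have hsum : ∑ z ∈ F, (c z : ℝ) * r' z = 0 :=
        Finset.sum_eq_zero (fun z hzF => by rw [hz z hzF]; simp)
      refine ⟨fun _ => 0, fun z => Nat.zero_le _, fun z _ => rfl, ?_⟩
      have hV : V = 0 := le_antisymm (by rw [hsum] at hVle; exact hVle) hV0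
      simp [hV]
  | succ N ih =>
      intro c F V hN hpos hdvd hpair hV0 hVle
      rcases eq_or_lt_of_le hV0 with hV | hV
      · exact ⟨fun _ => 0, fun z => Nat.zero_le _, fun z _ => rfl, by simp [← hV]⟩
      have hFsne : (F.filter (fun z => c z ≠ 0)).Nonempty := by
        by_contra hcon
        rw [Finset.not_nonempty_iff_eq_empty] at hcon
        have hzero : ∑ z ∈ F, (c z : ℝ) * r' z = 0 := by
          apply Finset.sum_eq_zero
          intro z hzF
          by_cases h : c z = 0
          · simp [h]
          · have hmem : z ∈ F.filter (fun z => c z ≠ 0) := Finset.mem_filter.mpr ⟨hzF, h⟩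
            rw [hcon] at hmem
            simp at hmem
        rw [hzero] at hVle; linarith
      obtain ⟨z1, hz1Fs, hz1max⟩ := Finset.exists_max_image _ r' hFsne
      have hz1F : z1 ∈ F := (Finset.mem_filter.mp hz1Fs).1
      have hc1 : c z1 ≠ 0 := (Finset.mem_filter.mp hz1Fs).2
      have hr1' : 0 < r' z1 := hpos z1 hz1F hc1
      obtain ⟨n1, hn1⟩ := hdvd z1 hz1F hc1
      have hn1pos : 1 ≤ n1 := by
        rcases Nat.eq_zero_or_pos n1 with rfl | h
        · simp at hn1; linarith
        · exact h
      have hVz1 : r' z1 ≤ V := by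
        have h1 : (1:ℝ) ≤ n1 := by exact_mod_cast hn1pos
        nlinarith
      set c' : ℕ → ℕ := Function.update c z1 (c z1 - 1) with hc'def
      have hc'z1 : c' z1 = c z1 - 1 := Function.update_self _ _ _
      have hc'ne : ∀ z, z ≠ z1 → c' z = c z := fun z hz => Function.update_of_ne hz _ _
      have hc'le : ∀ z, c' z ≤ c z := by
        intro z
        by_cases h : z = z1
        · subst h; rw [hc'z1]; omega
        · rw [hc'ne z h]
      have hsumc : ∑ z ∈ F, c' z + 1 = ∑ z ∈ F, c z := by
        rw [← Finset.add_sum_erase F c' hz1F, ← Finset.add_sum_erase F c hz1F]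
        have he : ∑ z ∈ F.erase z1, c' z = ∑ z ∈ F.erase z1, c z :=
          Finset.sum_congr rfl (fun z hz => hc'ne z (Finset.ne_of_mem_erase hz))
        rw [he, hc'z1]
        omega
      have hsumr : ∑ z ∈ F, (c' z : ℝ) * r' z = ∑ z ∈ F, (c z : ℝ) * r' z - r' z1 := by
        rw [← Finset.add_sum_erase F (fun z => (c' z : ℝ) * r' z) hz1F,
          ← Finset.add_sum_erase F (fun z => (c z : ℝ) * r' z) hz1F]
        have he : ∑ z ∈ F.erase z1, (c' z : ℝ) * r' z = ∑ z ∈ F.erase z1, (c z : ℝ) * r' z :=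
          Finset.sum_congr rfl (fun z hz => by rw [hc'ne z (Finset.ne_of_mem_erase hz)])
        rw [he, hc'z1]
        have h1 : 1 ≤ c z1 := Nat.one_le_iff_ne_zero.mpr hc1
        push_cast [Nat.cast_sub h1]
        ring
      have hc'imp : ∀ z, c' z ≠ 0 → c z ≠ 0 := by
        intro z hne h0
        apply hne
        by_cases h : z = z1
        · subst h; rw [hc'z1, h0]
        · rw [hc'ne z h]; exact h0
      have hdvd' : ∀ z ∈ F, c' z ≠ 0 → ∃ n : ℕ, V - r' z1 = n * r' z := by
        intro z hzF hne
        have hcz : c z ≠ 0 := hc'imp z hne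
        have hzFs : z ∈ F.filter (fun z => c z ≠ 0) := Finset.mem_filter.mpr ⟨hzF, hcz⟩
        have hle : r' z ≤ r' z1 := hz1max z hzFs
        obtain ⟨n2, hn2⟩ := hpair z hzF z1 hz1F hcz hc1 hle
        obtain ⟨n3, hn3⟩ := hdvd z hzF hcz
        have hrz : 0 < r' z := hpos z hzF hcz
        have hn23 : n2 ≤ n3 := by
          by_contra hcon
          push_neg at hcon
          have hlt : (n3 : ℝ) < n2 := by exact_mod_cast hcon
          nlinarith
        refine ⟨n3 - n2, ?_⟩
        rw [hn3, hn2]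
        push_cast [Nat.cast_sub hn23]
        ring
      have hpair' : ∀ z ∈ F, ∀ z' ∈ F, c' z ≠ 0 → c' z' ≠ 0 → r' z ≤ r' z' →
          ∃ n : ℕ, r' z' = n * r' z := fun z hz z' hz' hne hne' hle =>
        hpair z hz z' hz' (hc'imp z hne) (hc'imp z' hne') hle
      have hpos' : ∀ z ∈ F, c' z ≠ 0 → 0 < r' z := fun z hz hne => hpos z hz (hc'imp z hne)
      obtain ⟨u', hu'le, hu'0, hu'sum⟩ := ih c' F (V - r' z1) (by omega) hpos' hdvd' hpair'
        (by linarith) (by rw [hsumr]; linarith)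
      set u : ℕ → ℕ := Function.update u' z1 (u' z1 + 1) with hudef
      have huz1 : u z1 = u' z1 + 1 := Function.update_self _ _ _
      have hune : ∀ z, z ≠ z1 → u z = u' z := fun z hz => Function.update_of_ne hz _ _
      refine ⟨u, ?_, ?_, ?_⟩
      · intro z
        by_cases h : z = z1
        · subst h
          have h1 := hu'le z
          rw [hc'z1] at h1
          rw [huz1]
          have h2 : 1 ≤ c z := Nat.one_le_iff_ne_zero.mpr hc1
          omega
        · rw [hune z h]
          exact le_trans (hu'le z) (hc'le z)
      · intro z hz
        have hzz : z ≠ z1 := fun h => hz (h ▸ hz1F)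
        rw [hune z hzz]
        exact hu'0 z hz
      · rw [← Finset.add_sum_erase F (fun z => (u z : ℝ) * r' z) hz1F]
        have he : ∑ z ∈ F.erase z1, (u z : ℝ) * r' z = ∑ z ∈ F.erase z1, (u' z : ℝ) * r' z :=
          Finset.sum_congr rfl (fun z hz => by rw [hune z (Finset.ne_of_mem_erase hz)])
        rw [he, huz1]
        have he2 : ∑ z ∈ F.erase z1, (u' z : ℝ) * r' z
            = ∑ z ∈ F, (u' z : ℝ) * r' z - (u' z1 : ℝ) * r' z1 := by
          rw [← Finset.add_sum_erase F (fun z => (u' z : ℝ) * r' z) hz1F]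
          ring
        rw [he2, hu'sum]
        push_cast
        ring

lemma sum_exchange (F : Finset ℕ) (w : ℕ → ℕ) (h : ℕ → ℝ) (a k n c : ℕ)
    (hak : a ≠ k) (hc : c ≤ w k) :
    ∑ z ∈ F, ((if z = a then w a + n else if z = k then w k - c else w z : ℕ) : ℝ) * h z
      = ∑ z ∈ F, (w z : ℝ) * h z + (if a ∈ F then (n:ℝ) * h a else 0)
        - (if k ∈ F then (c:ℝ) * h k else 0) := by
  have key : ∀ z ∈ F,
      ((if z = a then w a + n else if z = k then w k - c else w z : ℕ) : ℝ) * h z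
        = (w z : ℝ) * h z + (if z = a then (n:ℝ) * h z else 0)
          - (if z = k then (c:ℝ) * h z else 0) := by
    intro z _
    by_cases h1 : z = a
    · subst h1
      rw [if_pos rfl, if_pos rfl, if_neg hak]
      push_cast
      ring
    · rw [if_neg h1, if_neg h1]
      by_cases h2 : z = k
      · subst h2
        rw [if_pos rfl, if_pos rfl]
        push_cast [Nat.cast_sub hc]
        ring
      · rw [if_neg h2, if_neg h2]
        ring
  rw [Finset.sum_congr rfl key]
  rw [Finset.sum_sub_distrib, Finset.sum_add_distrib,
    Finset.sum_ite_eq' F a (fun z => (n:ℝ) * h z), Finset.sum_ite_eq' F k (fun z => (c:ℝ) * h z)]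

lemma sum_exchange2 (F : Finset ℕ) (w u : ℕ → ℕ) (h : ℕ → ℝ) (z0 : ℕ)
    (hu : ∀ z, u z ≤ w z) (hu0 : u z0 = 0) :
    ∑ z ∈ F, ((if z = z0 then w z0 + 1 else w z - u z : ℕ) : ℝ) * h z
      = ∑ z ∈ F, (w z : ℝ) * h z + (if z0 ∈ F then h z0 else 0)
        - ∑ z ∈ F, (u z : ℝ) * h z := by
  have key : ∀ z ∈ F, ((if z = z0 then w z0 + 1 else w z - u z : ℕ) : ℝ) * h z
      = (w z:ℝ) * h z + (if z = z0 then h z else 0) - (u z : ℝ) * h z := by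
    intro z _
    by_cases h1 : z = z0
    · subst h1
      rw [if_pos rfl, if_pos rfl, hu0]
      push_cast
      ring
    · rw [if_neg h1, if_neg h1]
      push_cast [Nat.cast_sub (hu z)]
      ring
  rw [Finset.sum_congr rfl key]
  rw [Finset.sum_sub_distrib, Finset.sum_add_distrib, Finset.sum_ite_eq' F z0 (fun z => h z)]

end Sums

section Jobs

variable {ι : Type*} {m : ℕ} {g r : ℕ → ℝ} {s : ι → ℝ}

lemma mty_spec (hm : 1 ≤ m) {J : ι} (hJm : s J ≤ g m) :
    1 ≤ mty m g s J ∧ mty m g s J ≤ m ∧ s J ≤ g (mty m g s J) :=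
  Nat.sInf_mem (⟨m, hm, le_rfl, hJm⟩ : Set.Nonempty {z | 1 ≤ z ∧ z ≤ m ∧ s J ≤ g z})

lemma sum_natmul {m : ℕ} {r : ℕ → ℝ}
    (hr : ∀ i j, 1 ≤ i → i < j → j ≤ m → r i < r j)
    (hr8 : ∀ z, 1 ≤ z → z ≤ m → ∃ n : ℤ, r z = (8 : ℝ) ^ n)
    (F : Finset ℕ) (hF : ∀ z ∈ F, 1 ≤ z ∧ z ≤ m) (w : ℕ → ℕ) :
    ∃ n : ℕ, ∑ z ∈ F, (w z : ℝ) * r z = (n : ℝ) * r 1 := by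
  have h : ∀ z : ℕ, ∃ nz : ℕ, z ∈ F → r z = (nz : ℝ) * r 1 := by
    intro z
    by_cases hz : z ∈ F
    · obtain ⟨n, _, hn⟩ := ratio_nat hr hr8 le_rfl (hF z hz).1 (hF z hz).2
      exact ⟨n, fun _ => hn⟩
    · exact ⟨0, fun h => absurd h hz⟩
  choose f hf using h
  refine ⟨∑ z ∈ F, w z * f z, ?_⟩
  push_cast
  rw [Finset.sum_mul]
  refine Finset.sum_congr rfl (fun z hz => ?_)
  rw [hf z hz]
  ring

end Jobs

end BSHM

namespace BSHM

section Exchanges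

variable {ι : Type*} {m : ℕ} {g r : ℕ → ℝ} {s : ι → ℝ} {𝒥 : Finset ι}

lemma exchangeB
    (hg1 : 0 < g 1)
    (hg : ∀ i j, 1 ≤ i → i < j → j ≤ m → g i < g j)
    (hr : ∀ i j, 1 ≤ i → i < j → j ≤ m → r i < r j)
    (hr8 : ∀ z, 1 ≤ z → z ≤ m → ∃ n : ℤ, r z = (8 : ℝ) ^ n)
    (w : ℕ → ℕ) (hw : Feasible m g s 𝒥 w)
    (z0 : ℕ) (hz01 : 1 ≤ z0) (hz0m : z0 ≤ m)
    (hbig : r z0 ≤ ∑ z ∈ (Finset.Icc 1 m).filter (fun z => z ∈ A m g r z0 ∧ z ≠ z0),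
      (w z : ℝ) * r z) :
    ∃ w' : ℕ → ℕ, Feasible m g s 𝒥 w' ∧ cost m r w' = cost m r w ∧
      (∑ z ∈ Finset.Icc 1 m, ((w' z : ℝ))) + 1 ≤ ∑ z ∈ Finset.Icc 1 m, ((w z : ℝ)) := by
  classical
  set F : Finset ℕ := (Finset.Icc 1 m).filter (fun z => z ∈ A m g r z0 ∧ z ≠ z0) with hFdef
  have hFsub : F ⊆ Finset.Icc 1 m := Finset.filter_subset _ _
  have hFmem : ∀ z ∈ F, 1 ≤ z ∧ z ≤ m ∧ z < z0 ∧ r z0 / g z0 < r z / g z := by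
    intro z hz
    have hzf := Finset.mem_filter.mp hz
    have hzI := hzf.1
    have hzA := hzf.2.1
    have hzne := hzf.2.2
    have h1 : 1 ≤ z := (Finset.mem_Icc.mp hzI).1
    have h2 : z ≤ m := (Finset.mem_Icc.mp hzI).2
    have hchain : Relation.ReflTransGen (pstep m g r) z z0 := hzA.2.2
    refine ⟨h1, h2, lt_of_le_of_ne (chain_le hchain) hzne, chain_rho_lt hchain hzne⟩
  have hrz0 : 0 < r z0 := rpos hr8 hz01 hz0m
  have hgz0 : 0 < g z0 := gpos hg1 hg hz01 hz0m
  -- greedy subset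
  obtain ⟨u, hule, hu0, husum⟩ := greedy r (∑ z ∈ F, w z) w F (r z0) le_rfl
    (fun z hz _ => rpos hr8 (hFmem z hz).1 (hFmem z hz).2.1)
    (fun z hz _ => by
      obtain ⟨n, _, hn⟩ := ratio_nat hr hr8 (hFmem z hz).1 (hFmem z hz).2.2.1.le hz0m
      exact ⟨n, hn⟩)
    (fun z hz z' hz' _ _ hle => by
      have hzz' : z ≤ z' := by
        by_contra hcon
        push_neg at hcon
        exact absurd hle (not_le.mpr (hr z' z (hFmem z' hz').1 hcon (hFmem z hz).2.1))
      obtain ⟨n, _, hn⟩ := ratio_nat hr hr8 (hFmem z hz).1 hzz' (hFmem z' hz').2.1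
      exact ⟨n, hn⟩)
    hrz0.le hbig
  have huz0 : u z0 = 0 := hu0 z0 (by
    intro hmem
    exact ((Finset.mem_filter.mp hmem).2.2) rfl)
  -- the new configuration
  set w' : ℕ → ℕ := fun z => if z = z0 then w z0 + 1 else w z - u z with hw'def
  -- u sums over Icc equal sums over F
  have husub : ∀ h' : ℕ → ℝ, ∑ z ∈ Finset.Icc 1 m, (u z : ℝ) * h' z = ∑ z ∈ F, (u z : ℝ) * h' z := by
    intro h'
    refine (Finset.sum_subset hFsub (fun z hz hnz => ?_)).symm
    rw [hu0 z hnz]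
    simp
  -- cost equality
  have hcost : cost m r w' = cost m r w := by
    unfold cost
    have hexch := sum_exchange2 (Finset.Icc 1 m) w u r z0 hule huz0
    simp only [hw'def]
    rw [hexch, if_pos (Finset.mem_Icc.mpr ⟨hz01, hz0m⟩), husub r, husum]
    ring
  -- u capacity bound
  have hug : ∑ z ∈ F, (u z : ℝ) * g z ≤ g z0 := by
    have hpt : ∀ z ∈ F, (u z : ℝ) * g z ≤ (u z : ℝ) * (r z * (g z0 / r z0)) := by
      intro z hz
      obtain ⟨h1, h2, h3, h4⟩ := hFmem z hz
      have hgz : 0 < g z := gpos hg1 hg h1 h2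
      have hrzp : 0 < r z := rpos hr8 h1 h2
      have hkey : g z ≤ r z * (g z0 / r z0) := by
        rw [div_lt_div_iff₀ hgz0 hgz] at h4
        have h5 : r z * (g z0 / r z0) = r z * g z0 / r z0 := by ring
        rw [h5, le_div_iff₀ hrz0]
        nlinarith
      have hunn : (0:ℝ) ≤ (u z : ℝ) := Nat.cast_nonneg _
      nlinarith
    calc ∑ z ∈ F, (u z : ℝ) * g z ≤ ∑ z ∈ F, (u z : ℝ) * (r z * (g z0 / r z0)) :=
          Finset.sum_le_sum hpt
      _ = (∑ z ∈ F, (u z : ℝ) * r z) * (g z0 / r z0) := by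
          rw [Finset.sum_mul]
          exact Finset.sum_congr rfl (fun z _ => by ring)
      _ = g z0 := by rw [husum]; field_simp
  -- feasibility
  have hfeas : Feasible m g s 𝒥 w' := by
    intro i hi1 him
    have hcap := hw i hi1 him
    have hexch := sum_exchange2 (Finset.Icc i m) w u g z0 hule huz0
    simp only [hw'def]
    rw [hexch]
    by_cases hiz : i ≤ z0
    · rw [if_pos (Finset.mem_Icc.mpr ⟨hiz, hz0m⟩)]
      have hub : ∑ z ∈ Finset.Icc i m, (u z : ℝ) * g z ≤ g z0 := by
        refine le_trans ?_ hug
        rw [← Finset.sum_filter_of_ne (p := fun z => z ∈ F)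
          (fun z hz hne => by
            by_contra hcon
            rw [hu0 z hcon] at hne
            simp at hne)]
        refine Finset.sum_le_sum_of_subset_of_nonneg
          (fun z hz => (Finset.mem_filter.mp hz).2)
          (fun z hz _ => mul_nonneg (Nat.cast_nonneg _)
            (gpos hg1 hg (hFmem z hz).1 (hFmem z hz).2.1).le)
      linarith
    · push_neg at hiz
      rw [if_neg (by
        intro hmem
        exact absurd (Finset.mem_Icc.mp hmem).1 (not_le.mpr hiz))]
      have hzero : ∑ z ∈ Finset.Icc i m, (u z : ℝ) * g z = 0 := by
        apply Finset.sum_eq_zero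
        intro z hz
        have hzi : z0 < z := lt_of_lt_of_le hiz (Finset.mem_Icc.mp hz).1
        have : z ∉ F := by
          intro hmem
          exact absurd (hFmem z hmem).2.2.1 (not_lt.mpr hzi.le)
        rw [hu0 z this]
        simp
      rw [hzero]
      linarith
  -- count decrease
  have hcnt2 : (2:ℝ) ≤ ∑ z ∈ F, (u z : ℝ) := by
    have hpt : ∀ z ∈ F, (u z : ℝ) * r z ≤ (u z : ℝ) * (r z0 / 2) := by
      intro z hz
      obtain ⟨h1, h2, h3, _⟩ := hFmem z hz
      obtain ⟨n, hn2, hn⟩ := ratio_nat2 hr hr8 h1 h3 hz0m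
      have hrzp : 0 < r z := rpos hr8 h1 h2
      have : r z ≤ r z0 / 2 := by
        rw [hn]
        have : (2:ℝ) ≤ n := by exact_mod_cast hn2
        nlinarith
      have hunn : (0:ℝ) ≤ (u z : ℝ) := Nat.cast_nonneg _
      nlinarith
    have hsum : r z0 ≤ (∑ z ∈ F, (u z : ℝ)) * (r z0 / 2) := by
      calc r z0 = ∑ z ∈ F, (u z : ℝ) * r z := husum.symm
        _ ≤ ∑ z ∈ F, (u z : ℝ) * (r z0 / 2) := Finset.sum_le_sum hpt
        _ = (∑ z ∈ F, (u z : ℝ)) * (r z0 / 2) := by rw [Finset.sum_mul]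
    nlinarith
  have hcnt : (∑ z ∈ Finset.Icc 1 m, ((w' z : ℝ))) + 1 ≤ ∑ z ∈ Finset.Icc 1 m, ((w z : ℝ)) := by
    have hexch := sum_exchange2 (Finset.Icc 1 m) w u (fun _ => (1:ℝ)) z0 hule huz0
    simp only [mul_one] at hexch
    have huone : ∑ z ∈ Finset.Icc 1 m, (u z : ℝ) = ∑ z ∈ F, (u z : ℝ) := by
      have h2 := husub (fun _ => (1:ℝ))
      simpa using h2
    have heq : (∑ z ∈ Finset.Icc 1 m, ((w' z : ℝ)))
        = ∑ z ∈ Finset.Icc 1 m, (w z : ℝ) + (if z0 ∈ Finset.Icc 1 m then (1:ℝ) else 0)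
          - ∑ z ∈ Finset.Icc 1 m, (u z : ℝ) := by
      simp only [hw'def]
      rw [hexch]
    rw [heq, if_pos (Finset.mem_Icc.mpr ⟨hz01, hz0m⟩), huone]
    linarith
  exact ⟨w', hfeas, hcost, hcnt⟩

end Exchanges

end BSHM

namespace BSHM

section Shift

variable {ι : Type*} {m : ℕ} {g r : ℕ → ℝ} {s : ι → ℝ} {𝒥 : Finset ι}

lemma exchange_shift
    (hg1 : 0 < g 1)
    (hg : ∀ i j, 1 ≤ i → i < j → j ≤ m → g i < g j)
    (hr8 : ∀ z, 1 ≤ z → z ≤ m → ∃ n : ℤ, r z = (8 : ℝ) ^ n)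
    (hs : ∀ J ∈ 𝒥, 0 < s J ∧ s J ≤ g m)
    (w : ℕ → ℕ) (hw : Feasible m g s 𝒥 w)
    (a k : ℕ) (ha1 : 1 ≤ a) (hak : a < k) (hkm : k ≤ m)
    (nratio c : ℕ) (hnr : r k = (nratio : ℝ) * r a) (hc1 : 1 ≤ c) (hcw : c ≤ w k)
    (hrho : r a / g a ≤ r k / g k)
    (hstep : ∀ b, pstep m g r a b → k < b)
    (hdem0 : ∀ i, k < i → i ≤ m → 𝒥.filter (fun J => i ≤ mty m g s J) = ∅)
    (hmid : ∀ i, a < i → i ≤ k →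
      Ssum s (𝒥.filter (fun J => i ≤ mty m g s J)) ≤ ((w k : ℝ) - c) * g k) :
    Feasible m g s 𝒥 (fun z => if z = a then w a + c * nratio else if z = k then w k - c else w z)
    ∧ cost m r (fun z => if z = a then w a + c * nratio else if z = k then w k - c else w z)
        = cost m r w
    ∧ (∀ z0, 1 ≤ z0 → z0 ≤ m →
        ∑ z ∈ (Finset.Icc 1 m).filter (fun z => z ∈ A m g r z0 ∧ z ≠ z0),
          (((if z = a then w a + c * nratio else if z = k then w k - c else w z : ℕ)) : ℝ) * r z
        ≤ ∑ z ∈ (Finset.Icc 1 m).filter (fun z => z ∈ A m g r z0 ∧ z ≠ z0), (w z : ℝ) * r z) := by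
  classical
  have hka : a ≠ k := hak.ne
  have ham : a ≤ m := le_trans hak.le hkm
  have hk1 : 1 ≤ k := le_trans ha1 hak.le
  have hga : 0 < g a := gpos hg1 hg ha1 ham
  have hgk : 0 < g k := gpos hg1 hg hk1 hkm
  have hra : 0 < r a := rpos hr8 ha1 ham
  have hrk : 0 < r k := rpos hr8 hk1 hkm
  have hcap : (g k : ℝ) ≤ (nratio : ℝ) * g a := by
    rw [div_le_div_iff₀ hga hgk] at hrho
    have hn : (nratio : ℝ) = r k / r a := by rw [hnr]; field_simp
    rw [hn, div_mul_eq_mul_div, le_div_iff₀ hra]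
    nlinarith
  -- cost equality
  have hcost : cost m r (fun z => if z = a then w a + c * nratio else if z = k then w k - c else w z)
      = cost m r w := by
    unfold cost
    rw [sum_exchange (Finset.Icc 1 m) w r a k (c * nratio) c hka hcw,
      if_pos (Finset.mem_Icc.mpr ⟨ha1, ham⟩), if_pos (Finset.mem_Icc.mpr ⟨hk1, hkm⟩)]
    push_cast
    rw [hnr]
    ring
  -- feasibility
  have hfeas : Feasible m g s 𝒥
      (fun z => if z = a then w a + c * nratio else if z = k then w k - c else w z) := by
    intro i hi1 him
    have hcapi := hw i hi1 him
    rw [sum_exchange (Finset.Icc i m) w g a k (c * nratio) c hka hcw]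
    rcases le_or_gt i a with hia | hai
    · rw [if_pos (Finset.mem_Icc.mpr ⟨hia, ham⟩),
        if_pos (Finset.mem_Icc.mpr ⟨le_trans hia hak.le, hkm⟩)]
      have hc0 : (0:ℝ) ≤ c := Nat.cast_nonneg _
      have : (c:ℝ) * g k ≤ ((c * nratio : ℕ) : ℝ) * g a := by
        push_cast
        nlinarith
      linarith
    · rcases le_or_gt i k with hik | hki
      · rw [if_neg (fun hmem => absurd (Finset.mem_Icc.mp hmem).1 (not_le.mpr hai)),
          if_pos (Finset.mem_Icc.mpr ⟨hik, hkm⟩)]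
        have hmid' := hmid i hai hik
        -- cap i ≥ w k * g k plus other nonneg terms
        have hwk : (w k : ℝ) * g k ≤ ∑ z ∈ Finset.Icc i m, (w z : ℝ) * g z := by
          refine Finset.single_le_sum (f := fun z => (w z : ℝ) * g z) ?_ (Finset.mem_Icc.mpr ⟨hik, hkm⟩)
          intro z hz
          have h1 := (Finset.mem_Icc.mp hz).1
          have h2 := (Finset.mem_Icc.mp hz).2
          exact mul_nonneg (Nat.cast_nonneg _) (gpos hg1 hg (le_trans hi1 h1) h2).le
        linarith
      · rw [if_neg (fun hmem => absurd (Finset.mem_Icc.mp hmem).1 (not_le.mpr hai)),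
          if_neg (fun hmem => absurd (Finset.mem_Icc.mp hmem).1 (not_le.mpr hki))]
        rw [hdem0 i hki him]
        have : Ssum s (∅ : Finset ι) = 0 := by simp [Ssum]
        rw [this]
        have : (0:ℝ) ≤ ∑ z ∈ Finset.Icc i m, (w z : ℝ) * g z := by
          refine Finset.sum_nonneg (fun z hz => ?_)
          have h1 := (Finset.mem_Icc.mp hz).1
          have h2 := (Finset.mem_Icc.mp hz).2
          exact mul_nonneg (Nat.cast_nonneg _) (gpos hg1 hg (le_trans hi1 h1) h2).le
        linarith
  -- subtree sums do not increase
  refine ⟨hfeas, hcost, fun z0 hz01 hz0m => ?_⟩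
  set F0 : Finset ℕ := (Finset.Icc 1 m).filter (fun z => z ∈ A m g r z0 ∧ z ≠ z0) with hF0
  rw [sum_exchange F0 w r a k (c * nratio) c hka hcw]
  by_cases haF : a ∈ F0
  · -- then also k ∈ F0, and the two changes cancel
    have haA : a ∈ A m g r z0 := (Finset.mem_filter.mp haF).2.1
    have hane : a ≠ z0 := (Finset.mem_filter.mp haF).2.2
    have hchain : Relation.ReflTransGen (pstep m g r) a z0 := haA.2.2
    obtain hrefl | ⟨b, hab, hbz0⟩ := Relation.ReflTransGen.cases_head hchain
    · exact absurd hrefl hane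
    · have hkb : k < b := hstep b hab
      have hbpa : b = p m g r a := hab.2
      have hkchain : Relation.ReflTransGen (pstep m g r) k b := by
        rw [hbpa]
        exact reach_of_between_step (p m g r a - k) a k hab.1 hak (hbpa ▸ hkb) le_rfl
      have hkz0 : Relation.ReflTransGen (pstep m g r) k z0 := hkchain.trans hbz0
      have hkne : k ≠ z0 := by
        intro h
        subst h
        exact absurd (chain_le hbz0) (not_le.mpr hkb)
      have hkF : k ∈ F0 := Finset.mem_filter.mpr
        ⟨Finset.mem_Icc.mpr ⟨hk1, hkm⟩, ⟨hk1, hkm, hkz0⟩, hkne⟩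
      rw [if_pos haF, if_pos hkF]
      push_cast
      rw [hnr]
      linarith
  · rw [if_neg haF]
    by_cases hkF : k ∈ F0
    · rw [if_pos hkF]
      have : (0:ℝ) ≤ (c:ℝ) * r k := mul_nonneg (Nat.cast_nonneg _) hrk.le
      linarith
    · rw [if_neg hkF]
      simp

end Shift

end BSHM

namespace BSHM

lemma rho_le_of_step {m k a : ℕ} {g r : ℕ → ℝ} (hak : a < k) (hkm : k ≤ m)
    (hstep : ∀ b, pstep m g r a b → k < b) : r a / g a ≤ r k / g k := by
  by_contra hcon
  push_neg at hcon
  have hk : k ∈ pset m g r a := ⟨hkm, hak, hcon⟩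
  have hd : pdef m g r a := ⟨k, hk⟩
  have hlt := hstep (p m g r a) ⟨hd, rfl⟩
  exact absurd (Nat.sInf_le hk : p m g r a ≤ k) (not_le.mpr hlt)

end BSHM

namespace BSHM

set_option maxHeartbeats 2000000 in
theorem statement_7' {ι : Type*} (m : ℕ) (g r : ℕ → ℝ) (s : ι → ℝ) (𝒥 : Finset ι)
    (hm : 1 ≤ m)
    (hg1 : 0 < g 1) (hr1 : 0 < r 1)
    (hg : ∀ i j, 1 ≤ i → i < j → j ≤ m → g i < g j)
    (hr : ∀ i j, 1 ≤ i → i < j → j ≤ m → r i < r j)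
    (hr8 : ∀ z, 1 ≤ z → z ≤ m → ∃ n : ℤ, r z = (8 : ℝ) ^ n)
    (hJ : 𝒥.Nonempty)
    (hs : ∀ J ∈ 𝒥, 0 < s J ∧ s J ≤ g m) :
    ∃ w : ℕ → ℕ, Feasible m g s 𝒥 w ∧
      (∀ w' : ℕ → ℕ, Feasible m g s 𝒥 w' → cost m r w ≤ cost m r w') ∧
      (sSup {z | 1 ≤ z ∧ z ≤ m ∧ 0 < w z} ∈ P m g r (k0f m g s 𝒥)) ∧
      (∀ z0, 1 ≤ z0 → z0 ≤ m →
        (∑ z ∈ (Finset.Icc 1 m).filter (fun z => z ∈ A m g r z0 ∧ z ≠ z0),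
            (w z : ℝ) * r z) < r z0) ∧
      (⌊SH m g r s 𝒥 (sSup {z | 1 ≤ z ∧ z ≤ m ∧ 0 < w z})
          / g (sSup {z | 1 ≤ z ∧ z ≤ m ∧ 0 < w z})⌋₊
        ≤ w (sSup {z | 1 ≤ z ∧ z ≤ m ∧ 0 < w z}) ∧
       w (sSup {z | 1 ≤ z ∧ z ≤ m ∧ 0 < w z})
        ≤ ⌈SH m g r s 𝒥 (sSup {z | 1 ≤ z ∧ z ≤ m ∧ 0 < w z})
          / g (sSup {z | 1 ≤ z ∧ z ≤ m ∧ 0 < w z})⌉₊) := by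
  classical
  have hmty : ∀ J ∈ 𝒥, 1 ≤ mty m g s J ∧ mty m g s J ≤ m ∧ s J ≤ g (mty m g s J) :=
    fun J hJm => mty_spec hm (hs J hJm).2
  set k0 : ℕ := k0f m g s 𝒥 with hk0def
  have hmty_le : ∀ J ∈ 𝒥, mty m g s J ≤ k0 := fun J hJm => Finset.le_sup hJm
  have hk01 : 1 ≤ k0 := by
    obtain ⟨J0, hJ0⟩ := hJ
    exact le_trans (hmty J0 hJ0).1 (hmty_le J0 hJ0)
  have hk0m : k0 ≤ m := Finset.sup_le (fun J hJm => (hmty J hJm).2.1)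
  obtain ⟨Jst, hJstmem, hJst⟩ := Finset.exists_mem_eq_sup 𝒥 hJ (fun J => mty m g s J)
  have hdem0 : ∀ i, k0 < i → 𝒥.filter (fun J => i ≤ mty m g s J) = ∅ := by
    intro i hi
    apply Finset.filter_eq_empty_iff.mpr
    intro J hJm
    have := hmty_le J hJm
    omega
  have hdemnn : ∀ i : ℕ, 0 ≤ Ssum s (𝒥.filter (fun J => i ≤ mty m g s J)) := by
    intro i
    exact Finset.sum_nonneg (fun J hJm => (hs J (Finset.mem_filter.mp hJm).1).1.le)
  have hdemk0 : 0 < Ssum s (𝒥.filter (fun J => k0 ≤ mty m g s J)) := by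
    refine Finset.sum_pos' (fun J hJm => (hs J (Finset.mem_filter.mp hJm).1).1.le) ?_
    exact ⟨Jst, Finset.mem_filter.mpr ⟨hJstmem, le_of_eq hJst⟩, (hs Jst hJstmem).1⟩
  have hgm : 0 < g m := gpos hg1 hg hm le_rfl
  -- kopt facts for any feasible configuration
  have hkos : ∀ w : ℕ → ℕ, Feasible m g s 𝒥 w →
      1 ≤ sSup {z | 1 ≤ z ∧ z ≤ m ∧ 0 < w z} ∧
      sSup {z | 1 ≤ z ∧ z ≤ m ∧ 0 < w z} ≤ m ∧
      0 < w (sSup {z | 1 ≤ z ∧ z ≤ m ∧ 0 < w z}) ∧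
      k0 ≤ sSup {z | 1 ≤ z ∧ z ≤ m ∧ 0 < w z} ∧
      (∀ z, 1 ≤ z → z ≤ m → 0 < w z → z ≤ sSup {z | 1 ≤ z ∧ z ≤ m ∧ 0 < w z}) := by
    intro w hw
    have hbdd : BddAbove {z | 1 ≤ z ∧ z ≤ m ∧ 0 < w z} := ⟨m, fun z hz => hz.2.1⟩
    have hex : ∃ z, k0 ≤ z ∧ z ≤ m ∧ 0 < w z := by
      by_contra hcon
      push_neg at hcon
      have hzero : ∑ z ∈ Finset.Icc k0 m, (w z : ℝ) * g z = 0 := by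
        refine Finset.sum_eq_zero (fun z hz => ?_)
        have h1 := (Finset.mem_Icc.mp hz).1
        have h2 := (Finset.mem_Icc.mp hz).2
        have h3 := hcon z h1 h2
        have hz0 : w z = 0 := by omega
        rw [hz0]
        simp
      have hcap := hw k0 hk01 hk0m
      rw [hzero] at hcap
      linarith
    obtain ⟨z1, hz11, hz12, hz13⟩ := hex
    have hz1S : z1 ∈ {z | 1 ≤ z ∧ z ≤ m ∧ 0 < w z} := ⟨le_trans hk01 hz11, hz12, hz13⟩
    have hne : {z | 1 ≤ z ∧ z ≤ m ∧ 0 < w z}.Nonempty := ⟨z1, hz1S⟩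
    have hmem := Nat.sSup_mem hne hbdd
    exact ⟨hmem.1, hmem.2.1, hmem.2.2, le_trans hz11 (le_csSup hbdd hz1S),
      fun z h1 h2 h3 => le_csSup hbdd ⟨h1, h2, h3⟩⟩
  -- cost quantization
  set q : ℝ := r 1 with hqdef
  have hq0 : 0 < q := rpos hr8 le_rfl hm
  have hIccmem : ∀ z ∈ Finset.Icc 1 m, 1 ≤ z ∧ z ≤ m :=
    fun z hz => Finset.mem_Icc.mp hz
  have hcostN : ∀ w : ℕ → ℕ, ∃ n : ℕ, cost m r w = (n : ℝ) * q :=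
    fun w => sum_natmul hr hr8 (Finset.Icc 1 m) hIccmem w
  -- a feasible configuration exists
  have hw0ex : ∃ w : ℕ → ℕ, Feasible m g s 𝒥 w := by
    refine ⟨fun z => if z = m then ⌈Ssum s 𝒥 / g m⌉₊ else 0, ?_⟩
    intro i hi1 him
    have hsum : ∑ z ∈ Finset.Icc i m, ((if z = m then ⌈Ssum s 𝒥 / g m⌉₊ else 0 : ℕ) : ℝ) * g z
        = (⌈Ssum s 𝒥 / g m⌉₊ : ℝ) * g m := by
      rw [Finset.sum_congr rfl
        (fun z _ => show ((if z = m then ⌈Ssum s 𝒥 / g m⌉₊ else 0 : ℕ) : ℝ) * g z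
          = if z = m then (⌈Ssum s 𝒥 / g m⌉₊ : ℝ) * g z else 0 by split <;> simp)]
      rw [Finset.sum_ite_eq' (Finset.Icc i m) m (fun z => (⌈Ssum s 𝒥 / g m⌉₊ : ℝ) * g z),
        if_pos (Finset.mem_Icc.mpr ⟨him, le_rfl⟩)]
    rw [hsum]
    have h1 : Ssum s (𝒥.filter (fun J => i ≤ mty m g s J)) ≤ Ssum s 𝒥 :=
      Finset.sum_le_sum_of_subset_of_nonneg (Finset.filter_subset _ _)
        (fun J hJm _ => (hs J hJm).1.le)
    have h2 : Ssum s 𝒥 ≤ (⌈Ssum s 𝒥 / g m⌉₊ : ℝ) * g m := by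
      rw [← div_le_iff₀ hgm]
      exact Nat.le_ceil _
    linarith
  obtain ⟨w0, hw0f⟩ := hw0ex
  -- minimum cost
  have hCne : {n : ℕ | ∃ w : ℕ → ℕ, Feasible m g s 𝒥 w ∧ cost m r w = (n : ℝ) * q}.Nonempty := by
    obtain ⟨n0, hn0⟩ := hcostN w0
    exact ⟨n0, w0, hw0f, hn0⟩
  set n1 : ℕ := sInf {n : ℕ | ∃ w : ℕ → ℕ, Feasible m g s 𝒥 w ∧ cost m r w = (n : ℝ) * q}
    with hn1def
  obtain ⟨w1, hw1f, hw1c⟩ := Nat.sInf_mem hCne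
  have hmincost : ∀ w' : ℕ → ℕ, Feasible m g s 𝒥 w' → (n1 : ℝ) * q ≤ cost m r w' := by
    intro w' hw'
    obtain ⟨n', hn'⟩ := hcostN w'
    rw [hn']
    have hle : n1 ≤ n' := Nat.sInf_le ⟨w', hw', hn'⟩
    have hle' : (n1 : ℝ) ≤ (n' : ℝ) := by exact_mod_cast hle
    nlinarith
  -- among min cost, minimize machine count: gives property (2)
  have hC2ne : {n : ℕ | ∃ w : ℕ → ℕ, Feasible m g s 𝒥 w ∧ cost m r w = (n1 : ℝ) * q ∧
      (∑ z ∈ Finset.Icc 1 m, w z) = n}.Nonempty := ⟨_, w1, hw1f, hw1c, rfl⟩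
  obtain ⟨w2, hw2f, hw2c, hw2n⟩ := Nat.sInf_mem hC2ne
  have hprop2 : ∀ z0, 1 ≤ z0 → z0 ≤ m →
      (∑ z ∈ (Finset.Icc 1 m).filter (fun z => z ∈ A m g r z0 ∧ z ≠ z0),
        (w2 z : ℝ) * r z) < r z0 := by
    by_contra hcon
    push_neg at hcon
    obtain ⟨z0, hz01, hz0m, hbig⟩ := hcon
    obtain ⟨w', hw'f, hw'c, hw'n⟩ := exchangeB hg1 hg hr hr8 w2 hw2f z0 hz01 hz0m hbig
    have hw'c2 : cost m r w' = (n1 : ℝ) * q := by rw [hw'c, hw2c]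
    have hmem : (∑ z ∈ Finset.Icc 1 m, w' z) ∈ {n : ℕ | ∃ w : ℕ → ℕ, Feasible m g s 𝒥 w ∧
        cost m r w = (n1 : ℝ) * q ∧ (∑ z ∈ Finset.Icc 1 m, w z) = n} := ⟨w', hw'f, hw'c2, rfl⟩
    have hle := Nat.sInf_le hmem
    have hcast : ((∑ z ∈ Finset.Icc 1 m, w' z : ℕ) : ℝ) + 1
        ≤ ((∑ z ∈ Finset.Icc 1 m, w2 z : ℕ) : ℝ) := by
      push_cast
      exact hw'n
    have hlt : (∑ z ∈ Finset.Icc 1 m, w' z) < ∑ z ∈ Finset.Icc 1 m, w2 z := by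
      by_contra hcon2
      push_neg at hcon2
      have : ((∑ z ∈ Finset.Icc 1 m, w2 z : ℕ) : ℝ) ≤ ((∑ z ∈ Finset.Icc 1 m, w' z : ℕ) : ℝ) := by
        exact_mod_cast hcon2
      linarith
    rw [← hw2n] at hle
    exact absurd hle (not_le.mpr hlt)
  have hqle : ∀ k, 1 ≤ k → k ≤ m → q ≤ r k := by
    intro k h1 h2
    obtain ⟨n, hn1, hn⟩ := ratio_nat hr hr8 le_rfl h1 h2
    rw [hn, hqdef]
    have hn1' : (1 : ℝ) ≤ (n : ℝ) := by exact_mod_cast hn1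
    nlinarith
  -- stage B: reach property (1)
  have hBind : ∀ N : ℕ, ∀ w : ℕ → ℕ, Feasible m g s 𝒥 w → cost m r w = (n1 : ℝ) * q →
      (∀ z0, 1 ≤ z0 → z0 ≤ m →
        (∑ z ∈ (Finset.Icc 1 m).filter (fun z => z ∈ A m g r z0 ∧ z ≠ z0),
          (w z : ℝ) * r z) < r z0) →
      (∑ z ∈ (Finset.Icc 1 m).filter (fun z => ¬ (z ∈ P m g r k0)), (w z : ℝ) * r z)
        ≤ (N : ℝ) * q →
      ∃ w' : ℕ → ℕ, Feasible m g s 𝒥 w' ∧ cost m r w' = (n1 : ℝ) * q ∧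
        (∀ z0, 1 ≤ z0 → z0 ≤ m →
          (∑ z ∈ (Finset.Icc 1 m).filter (fun z => z ∈ A m g r z0 ∧ z ≠ z0),
            (w' z : ℝ) * r z) < r z0) ∧
        sSup {z | 1 ≤ z ∧ z ≤ m ∧ 0 < w' z} ∈ P m g r k0 := by
    intro N
    induction N with
    | zero =>
        intro w hwf hwc hwp hΨ
        by_cases hkP : sSup {z | 1 ≤ z ∧ z ≤ m ∧ 0 < w z} ∈ P m g r k0
        · exact ⟨w, hwf, hwc, hwp, hkP⟩
        · exfalso
          obtain ⟨hk1, hkm, hwk, hk0k, hub⟩ := hkos w hwf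
          have hkF : sSup {z | 1 ≤ z ∧ z ≤ m ∧ 0 < w z} ∈
              (Finset.Icc 1 m).filter (fun z => ¬ (z ∈ P m g r k0)) :=
            Finset.mem_filter.mpr ⟨Finset.mem_Icc.mpr ⟨hk1, hkm⟩, hkP⟩
          have hpos : (0 : ℝ) <
              (w (sSup {z | 1 ≤ z ∧ z ≤ m ∧ 0 < w z}) : ℝ)
                * r (sSup {z | 1 ≤ z ∧ z ≤ m ∧ 0 < w z}) := by
            have hwk' : (1 : ℝ) ≤ (w (sSup {z | 1 ≤ z ∧ z ≤ m ∧ 0 < w z}) : ℝ) := by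
              exact_mod_cast hwk
            nlinarith [rpos hr8 hk1 hkm]
          have hsingle : (w (sSup {z | 1 ≤ z ∧ z ≤ m ∧ 0 < w z}) : ℝ)
                * r (sSup {z | 1 ≤ z ∧ z ≤ m ∧ 0 < w z})
              ≤ ∑ z ∈ (Finset.Icc 1 m).filter (fun z => ¬ (z ∈ P m g r k0)),
                (w z : ℝ) * r z := by
            refine Finset.single_le_sum (f := fun z => (w z : ℝ) * r z) ?_ hkF
            intro z hz
            have hz' := hIccmem z (Finset.mem_filter.mp hz).1
            exact mul_nonneg (Nat.cast_nonneg _) (rpos hr8 hz'.1 hz'.2).le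
          simp only [Nat.cast_zero, zero_mul] at hΨ
          linarith
    | succ N ih =>
        intro w hwf hwc hwp hΨ
        by_cases hkP : sSup {z | 1 ≤ z ∧ z ≤ m ∧ 0 < w z} ∈ P m g r k0
        · exact ⟨w, hwf, hwc, hwp, hkP⟩
        · obtain ⟨hk1, hkm, hwk, hk0k, hub⟩ := hkos w hwf
          set k : ℕ := sSup {z | 1 ≤ z ∧ z ≤ m ∧ 0 < w z} with hkdef
          have hk0lt : k0 < k := by
            rcases eq_or_lt_of_le hk0k with heq | hlt
            · exact absurd (heq ▸ (Relation.ReflTransGen.refl :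
                Relation.ReflTransGen (pstep m g r) k0 k0)) (heq ▸ hkP)
            · exact hlt
          have hS1ne : {t | t ∈ P m g r k0 ∧ t < k}.Nonempty :=
            ⟨k0, Relation.ReflTransGen.refl, hk0lt⟩
          have hS1bdd : BddAbove {t | t ∈ P m g r k0 ∧ t < k} := ⟨k, fun t ht => ht.2.le⟩
          set a : ℕ := sSup {t | t ∈ P m g r k0 ∧ t < k} with hadef
          have haS := Nat.sSup_mem hS1ne hS1bdd
          have haP : a ∈ P m g r k0 := haS.1
          have hak : a < k := haS.2
          have ha0 : k0 ≤ a := chain_le haP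
          have ha1 : 1 ≤ a := le_trans hk01 ha0
          have ham : a ≤ m := chain_le_m haP hk0m
          have hstep : ∀ b, pstep m g r a b → k < b := by
            intro b hb
            have hbP : b ∈ P m g r k0 := Relation.ReflTransGen.tail haP hb
            have hab : a < b := (pstep_spec hb).2.1
            by_contra hcon
            push_neg at hcon
            rcases eq_or_lt_of_le hcon with rfl | hbk
            · exact hkP hbP
            · exact absurd (le_csSup hS1bdd (⟨hbP, hbk⟩ :
                b ∈ {t | t ∈ P m g r k0 ∧ t < k})) (not_le.mpr hab)
          have hrho := rho_le_of_step hak hkm hstep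
          obtain ⟨nr, hnr1, hnr⟩ := ratio_nat hr hr8 ha1 hak.le hkm
          have hdem0' : ∀ i, k < i → i ≤ m → 𝒥.filter (fun J => i ≤ mty m g s J) = ∅ :=
            fun i hi _ => hdem0 i (lt_of_le_of_lt hk0k hi)
          have hmid : ∀ i, a < i → i ≤ k →
              Ssum s (𝒥.filter (fun J => i ≤ mty m g s J)) ≤ ((w k : ℝ) - (w k : ℕ)) * g k := by
            intro i hai hik
            rw [hdem0 i (lt_of_le_of_lt ha0 hai)]
            have h1 : Ssum s (∅ : Finset ι) = 0 := by simp [Ssum]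
            rw [h1, sub_self, zero_mul]
          have hwk1 : 1 ≤ w k := hwk
          obtain ⟨hf', hc', hsub'⟩ := exchange_shift hg1 hg hr8 hs w hwf a k ha1 hak hkm
            nr (w k) hnr hwk1 le_rfl hrho hstep hdem0' hmid
          have hψ' : ∑ z ∈ (Finset.Icc 1 m).filter (fun z => ¬ (z ∈ P m g r k0)),
              (((if z = a then w a + w k * nr else if z = k then w k - w k else w z : ℕ)) : ℝ) * r z
                ≤ (N : ℝ) * q := by
            rw [sum_exchange ((Finset.Icc 1 m).filter (fun z => ¬ (z ∈ P m g r k0)))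
              w r a k (w k * nr) (w k) hak.ne le_rfl]
            have haFψ : a ∉ (Finset.Icc 1 m).filter (fun z => ¬ (z ∈ P m g r k0)) := by
              intro hmem
              exact (Finset.mem_filter.mp hmem).2 haP
            have hkFψ : k ∈ (Finset.Icc 1 m).filter (fun z => ¬ (z ∈ P m g r k0)) :=
              Finset.mem_filter.mpr ⟨Finset.mem_Icc.mpr ⟨le_trans ha1 hak.le, hkm⟩, hkP⟩
            rw [if_neg haFψ, if_pos hkFψ]
            have h1 : q ≤ (w k : ℝ) * r k := by
              have h2 := hqle k (le_trans ha1 hak.le) hkm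
              have hwk' : (1 : ℝ) ≤ (w k : ℝ) := by exact_mod_cast hwk1
              nlinarith [rpos hr8 (le_trans ha1 hak.le) hkm]
            push_cast at hΨ ⊢
            linarith
          exact ih _ hf' (hc'.trans hwc) (fun z0 h1 h2 =>
            lt_of_le_of_lt (hsub' z0 h1 h2) (hwp z0 h1 h2)) hψ'
  -- stage C: upper bound of property (3)
  have hCind : ∀ N : ℕ, ∀ w : ℕ → ℕ, Feasible m g s 𝒥 w → cost m r w = (n1 : ℝ) * q →
      (∀ z0, 1 ≤ z0 → z0 ≤ m →
        (∑ z ∈ (Finset.Icc 1 m).filter (fun z => z ∈ A m g r z0 ∧ z ≠ z0),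
          (w z : ℝ) * r z) < r z0) →
      sSup {z | 1 ≤ z ∧ z ≤ m ∧ 0 < w z} ∈ P m g r k0 →
      w (sSup {z | 1 ≤ z ∧ z ≤ m ∧ 0 < w z}) ≤ N →
      ∃ w' : ℕ → ℕ, Feasible m g s 𝒥 w' ∧ cost m r w' = (n1 : ℝ) * q ∧
        (∀ z0, 1 ≤ z0 → z0 ≤ m →
          (∑ z ∈ (Finset.Icc 1 m).filter (fun z => z ∈ A m g r z0 ∧ z ≠ z0),
            (w' z : ℝ) * r z) < r z0) ∧
        sSup {z | 1 ≤ z ∧ z ≤ m ∧ 0 < w' z} ∈ P m g r k0 ∧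
        w' (sSup {z | 1 ≤ z ∧ z ≤ m ∧ 0 < w' z})
          ≤ ⌈SH m g r s 𝒥 (sSup {z | 1 ≤ z ∧ z ≤ m ∧ 0 < w' z})
            / g (sSup {z | 1 ≤ z ∧ z ≤ m ∧ 0 < w' z})⌉₊ := by
    intro N
    induction N with
    | zero =>
        intro w hwf hwc hwp hkP hN
        obtain ⟨hk1, hkm, hwk, hk0k, hub⟩ := hkos w hwf
        exact absurd hN (Nat.not_le.mpr hwk)
    | succ N ih =>
        intro w hwf hwc hwp hkP hN
        by_cases hup : w (sSup {z | 1 ≤ z ∧ z ≤ m ∧ 0 < w z})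
            ≤ ⌈SH m g r s 𝒥 (sSup {z | 1 ≤ z ∧ z ≤ m ∧ 0 < w z})
              / g (sSup {z | 1 ≤ z ∧ z ≤ m ∧ 0 < w z})⌉₊
        · exact ⟨w, hwf, hwc, hwp, hkP, hup⟩
        · push_neg at hup
          obtain ⟨hk1, hkm, hwk, hk0k, hub⟩ := hkos w hwf
          set k : ℕ := sSup {z | 1 ≤ z ∧ z ≤ m ∧ 0 < w z} with hkdef
          clear_value k
          clear hkdef
          have hgk : 0 < g k := gpos hg1 hg hk1 hkm
          have hrk : 0 < r k := rpos hr8 hk1 hkm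
          have hAiff := mem_A_iff (m := m) (g := g) (r := r) hk1 hkm
          have hk0A : k0 ∈ A m g r k := ⟨hk01, hk0m, hkP⟩
          have hvk0 : v m g r k ≤ k0 := Nat.sInf_le hk0A
          have hv := v_mem_A (m := m) (g := g) (r := r) hk1 hkm
          have hv1 : 1 ≤ v m g r k := hv.1
          have hHmem : ∀ J, J ∈ H m g r s k 𝒥 ↔ (J ∈ 𝒥 ∧ v m g r k ≤ mty m g s J) := by
            intro J
            constructor
            · intro hJm
              have h2 := Finset.mem_filter.mp hJm
              exact ⟨h2.1, ((hAiff _).mp h2.2).1⟩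
            · rintro ⟨hJm, hvm⟩
              refine Finset.mem_filter.mpr ⟨hJm, (hAiff _).mpr ⟨hvm, ?_⟩⟩
              exact le_trans (hmty_le J hJm) hk0k
          have hDpos : 0 < SH m g r s 𝒥 k := by
            refine Finset.sum_pos' (fun J hJm => (hs J ((hHmem J).mp hJm).1).1.le) ?_
            refine ⟨Jst, (hHmem Jst).mpr ⟨hJstmem, ?_⟩, (hs Jst hJstmem).1⟩
            rw [← hJst]
            exact hvk0
          have hdemD : ∀ i, v m g r k ≤ i →
              Ssum s (𝒥.filter (fun J => i ≤ mty m g s J)) ≤ SH m g r s 𝒥 k := by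
            intro i hvi
            refine Finset.sum_le_sum_of_subset_of_nonneg ?_
              (fun J hJm _ => (hs J ((hHmem J).mp hJm).1).1.le)
            intro J hJm
            have h2 := Finset.mem_filter.mp hJm
            exact (hHmem J).mpr ⟨h2.1, le_trans hvi h2.2⟩
          have hceil : SH m g r s 𝒥 k ≤ (⌈SH m g r s 𝒥 k / g k⌉₊ : ℝ) * g k := by
            rw [← div_le_iff₀ hgk]
            exact Nat.le_ceil _
          have hceil1 : 1 ≤ ⌈SH m g r s 𝒥 k / g k⌉₊ :=
            Nat.one_le_iff_ne_zero.mpr (Nat.ceil_pos.mpr (div_pos hDpos hgk)).ne'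
          have hwk2 : ⌈SH m g r s 𝒥 k / g k⌉₊ + 1 ≤ w k := hup
          rcases eq_or_lt_of_le hv1 with hveq | hvgt
          · -- v = 1 : removing one machine of type k contradicts cost minimality
            exfalso
            have hm1k : (m + 1 : ℕ) ≠ k := (Nat.lt_succ_of_le hkm).ne'
            have hf'' : Feasible m g s 𝒥
                (fun z => if z = m + 1 then w (m+1) + 1 * 0 else if z = k then w k - 1 else w z) := by
              intro i hi1 him
              rw [sum_exchange (Finset.Icc i m) w g (m+1) k (1 * 0) 1 hm1k hwk]
              rw [if_neg (fun hmem => Nat.not_succ_le_self m (Finset.mem_Icc.mp hmem).2)]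
              rcases le_or_gt i k with hik | hki
              · rw [if_pos (Finset.mem_Icc.mpr ⟨hik, hkm⟩)]
                have hd := hdemD i (hveq ▸ hi1)
                have hwg : (w k : ℝ) * g k ≤ ∑ z ∈ Finset.Icc i m, (w z : ℝ) * g z := by
                  refine Finset.single_le_sum (f := fun z => (w z : ℝ) * g z) ?_
                    (Finset.mem_Icc.mpr ⟨hik, hkm⟩)
                  intro z hz
                  have hz' := Finset.mem_Icc.mp hz
                  exact mul_nonneg (Nat.cast_nonneg _)
                    (gpos hg1 hg (le_trans hi1 hz'.1) hz'.2).le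
                have hcast : (⌈SH m g r s 𝒥 k / g k⌉₊ : ℝ) + 1 ≤ (w k : ℝ) := by
                  exact_mod_cast hwk2
                push_cast
                nlinarith
              · rw [if_neg (fun hmem => absurd (Finset.mem_Icc.mp hmem).1 (not_le.mpr hki))]
                rw [hdem0 i (lt_of_le_of_lt hk0k hki)]
                have h1 : Ssum s (∅ : Finset ι) = 0 := by simp [Ssum]
                rw [h1]
                have h2 : (0:ℝ) ≤ ∑ z ∈ Finset.Icc i m, (w z : ℝ) * g z := by
                  refine Finset.sum_nonneg (fun z hz => ?_)
                  have hz' := Finset.mem_Icc.mp hz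
                  exact mul_nonneg (Nat.cast_nonneg _)
                    (gpos hg1 hg (le_trans hi1 hz'.1) hz'.2).le
                push_cast
                linarith
            have hc'' : cost m r
                (fun z => if z = m + 1 then w (m+1) + 1 * 0 else if z = k then w k - 1 else w z)
                = cost m r w - r k := by
              unfold cost
              rw [sum_exchange (Finset.Icc 1 m) w r (m+1) k (1 * 0) 1 hm1k hwk]
              rw [if_neg (fun hmem => Nat.not_succ_le_self m (Finset.mem_Icc.mp hmem).2)]
              rw [if_pos (Finset.mem_Icc.mpr ⟨hk1, hkm⟩)]
              push_cast
              ring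
            have hcontra := hmincost _ hf''
            rw [hc'', hwc] at hcontra
            linarith
          · -- v ≥ 2 : shift one machine from k down to a = v - 1
            have hvk : v m g r k ≤ k := chain_le hv.2.2
            set a : ℕ := v m g r k - 1 with hadef
            have hvpos : 0 < v m g r k := lt_of_lt_of_le Nat.zero_lt_one hv1
            have hva : a + 1 = v m g r k := by
              rw [hadef]
              exact Nat.succ_pred_eq_of_pos hvpos
            have ha1 : 1 ≤ a := by
              rw [hadef]
              exact Nat.le_sub_one_of_lt hvgt
            have hav : a < v m g r k := by
              rw [hadef]
              exact Nat.sub_lt hvpos Nat.one_pos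
            have ham : a ≤ m := le_trans hav.le (le_trans hvk0 hk0m)
            have hak : a < k := lt_of_lt_of_le hav hvk
            have hanotA : a ∉ A m g r k := by
              intro hmem
              exact absurd (Nat.sInf_le hmem : v m g r k ≤ a) (not_le.mpr hav)
            have hstep : ∀ b, pstep m g r a b → k < b := by
              intro b hb
              have hab : a < b := (pstep_spec hb).2.1
              have hbm : b ≤ m := (pstep_spec hb).1
              by_contra hcon
              push_neg at hcon
              have hvb : v m g r k ≤ b := hva ▸ Nat.succ_le_of_lt hab
              have hbA : b ∈ A m g r k := (hAiff b).mpr ⟨hvb, hcon⟩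
              exact hanotA ⟨ha1, ham, Relation.ReflTransGen.head hb hbA.2.2⟩
            have hrho := rho_le_of_step hak hkm hstep
            obtain ⟨nr, hnr1, hnr⟩ := ratio_nat hr hr8 ha1 hak.le hkm
            have hdem0' : ∀ i, k < i → i ≤ m → 𝒥.filter (fun J => i ≤ mty m g s J) = ∅ := by
              intro i hi _
              exact hdem0 i (lt_of_le_of_lt hk0k hi)
            have hmid : ∀ i, a < i → i ≤ k →
                Ssum s (𝒥.filter (fun J => i ≤ mty m g s J)) ≤ ((w k : ℝ) - (1 : ℕ)) * g k := by
              intro i hai hik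
              have hd := hdemD i (hva ▸ Nat.succ_le_of_lt hai)
              have hcast : (⌈SH m g r s 𝒥 k / g k⌉₊ : ℝ) + 1 ≤ (w k : ℝ) := by
                exact_mod_cast hwk2
              push_cast
              nlinarith
            have hwk1 : 1 ≤ w k := hwk
            obtain ⟨hf', hc', hsub'⟩ := exchange_shift hg1 hg hr8 hs w hwf a k ha1 hak hkm
              nr 1 hnr le_rfl hwk1 hrho hstep hdem0' hmid
            set w' : ℕ → ℕ :=
              fun z => if z = a then w a + 1 * nr else if z = k then w k - 1 else w z
              with hw'def
            have hw'k : w' k = w k - 1 := by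
              rw [hw'def]
              simp [hak.ne']
            have hw'other : ∀ z, z ≠ a → z ≠ k → w' z = w z := by
              intro z h1 h2
              rw [hw'def]
              simp [h1, h2]
            have hw'kpos : 0 < w' k := by
              rw [hw'k]
              have h2 : 1 + 1 ≤ w k := le_trans (Nat.add_le_add_right hceil1 1) hwk2
              exact Nat.sub_pos_of_lt h2
            have hss : sSup {z | 1 ≤ z ∧ z ≤ m ∧ 0 < w' z} = k := by
              have hbdd : BddAbove {z | 1 ≤ z ∧ z ≤ m ∧ 0 < w' z} := ⟨m, fun z hz => hz.2.1⟩
              refine le_antisymm ?_ (le_csSup hbdd ⟨hk1, hkm, hw'kpos⟩)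
              refine csSup_le ⟨k, hk1, hkm, hw'kpos⟩ ?_
              rintro z ⟨h1, h2, h3⟩
              by_cases hza : z = a
              · subst hza
                exact hak.le
              · by_cases hzk : z = k
                · subst hzk
                  exact le_rfl
                · rw [hw'other z hza hzk] at h3
                  exact hub z h1 h2 h3
            refine ih w' hf' (hc'.trans hwc)
              (fun z0 h1 h2 => lt_of_le_of_lt (hsub' z0 h1 h2) (hwp z0 h1 h2)) ?_ ?_
            · rw [hss]
              exact hkP
            · rw [hss, hw'k]
              exact Nat.sub_le_iff_le_add.mpr hN
  -- assemble the final configuration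
  obtain ⟨nps2, hnps2⟩ := sum_natmul hr hr8
    ((Finset.Icc 1 m).filter (fun z => ¬ (z ∈ P m g r k0)))
    (fun z hz => hIccmem z (Finset.mem_filter.mp hz).1) w2
  obtain ⟨w3, hw3f, hw3c, hw3p, hw3k⟩ := hBind nps2 w2 hw2f hw2c hprop2 (le_of_eq hnps2)
  obtain ⟨w4, hw4f, hw4c, hw4p, hw4k, hw4up⟩ :=
    hCind (w3 (sSup {z | 1 ≤ z ∧ z ≤ m ∧ 0 < w3 z})) w3 hw3f hw3c hw3p hw3k le_rfl
  have hlow : ⌊SH m g r s 𝒥 (sSup {z | 1 ≤ z ∧ z ≤ m ∧ 0 < w4 z})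
      / g (sSup {z | 1 ≤ z ∧ z ≤ m ∧ 0 < w4 z})⌋₊
      ≤ w4 (sSup {z | 1 ≤ z ∧ z ≤ m ∧ 0 < w4 z}) := by
    obtain ⟨hk1, hkm, hwk, hk0k, hub⟩ := hkos w4 hw4f
    set k : ℕ := sSup {z | 1 ≤ z ∧ z ≤ m ∧ 0 < w4 z} with hkdef
    clear_value k
    clear hkdef
    by_contra hcon
    push_neg at hcon
    have hgk : 0 < g k := gpos hg1 hg hk1 hkm
    have hrk : 0 < r k := rpos hr8 hk1 hkm
    have hAiff := mem_A_iff (m := m) (g := g) (r := r) hk1 hkm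
    have hk0A : k0 ∈ A m g r k := ⟨hk01, hk0m, hw4k⟩
    have hvk0 : v m g r k ≤ k0 := Nat.sInf_le hk0A
    have hv := v_mem_A (m := m) (g := g) (r := r) hk1 hkm
    have hv1 : 1 ≤ v m g r k := hv.1
    have hvm : v m g r k ≤ m := hv.2.1
    have hvk : v m g r k ≤ k := chain_le hv.2.2
    have hdemDeq : SH m g r s 𝒥 k = Ssum s (𝒥.filter (fun J => v m g r k ≤ mty m g s J)) := by
      unfold SH H Ssum
      congr 1
      apply Finset.filter_congr
      intro J hJm
      constructor
      · intro hmem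
        exact ((hAiff _).mp hmem).1
      · intro hmem
        exact (hAiff _).mpr ⟨hmem, le_trans (hmty_le J hJm) hk0k⟩
    have hD0 : 0 ≤ SH m g r s 𝒥 k := by
      rw [hdemDeq]
      exact hdemnn _
    have hfeasv := hw4f (v m g r k) hv1 hvm
    rw [← hdemDeq] at hfeasv
    have hkIcc : k ∈ Finset.Icc (v m g r k) m := Finset.mem_Icc.mpr ⟨hvk, hkm⟩
    have hsplit : (w4 k : ℝ) * g k
        + ∑ z ∈ (Finset.Icc (v m g r k) m).erase k, (w4 z : ℝ) * g z
        = ∑ z ∈ Finset.Icc (v m g r k) m, (w4 z : ℝ) * g z :=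
      Finset.add_sum_erase _ (fun z => (w4 z : ℝ) * g z) hkIcc
    have hfloor : (⌊SH m g r s 𝒥 k / g k⌋₊ : ℝ) * g k ≤ SH m g r s 𝒥 k := by
      have h1 : (⌊SH m g r s 𝒥 k / g k⌋₊ : ℝ) ≤ SH m g r s 𝒥 k / g k :=
        Nat.floor_le (div_nonneg hD0 hgk.le)
      rw [← le_div_iff₀ hgk]
      exact h1
    have hw4kle : (w4 k : ℝ) ≤ (⌊SH m g r s 𝒥 k / g k⌋₊ : ℝ) - 1 := by
      have h1 : (w4 k : ℝ) + 1 ≤ (⌊SH m g r s 𝒥 k / g k⌋₊ : ℝ) := by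
        exact_mod_cast hcon
      linarith
    have hX : g k ≤ ∑ z ∈ (Finset.Icc (v m g r k) m).erase k, (w4 z : ℝ) * g z := by
      nlinarith
    have hXG : ∑ z ∈ (Finset.Icc (v m g r k) m).erase k, (w4 z : ℝ) * g z
        ≤ ∑ z ∈ (Finset.Icc 1 m).filter (fun z => z ∈ A m g r k ∧ z ≠ k),
          (w4 z : ℝ) * g z := by
      rw [← Finset.sum_filter_of_ne
        (p := fun z => z ∈ (Finset.Icc 1 m).filter (fun z => z ∈ A m g r k ∧ z ≠ k))
        (fun z hz hne => ?_)]
      · refine Finset.sum_le_sum_of_subset_of_nonneg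
          (fun z hz => (Finset.mem_filter.mp hz).2) (fun z hz _ => ?_)
        have hz' := hIccmem z (Finset.mem_filter.mp hz).1
        exact mul_nonneg (Nat.cast_nonneg _) (gpos hg1 hg hz'.1 hz'.2).le
      · have hzk : z ≠ k := Finset.ne_of_mem_erase hz
        have hzI := Finset.mem_Icc.mp (Finset.mem_of_mem_erase hz)
        have hwz : w4 z ≠ 0 := by
          intro h0
          rw [h0] at hne
          simp at hne
        have hzle : z ≤ k := hub z (le_trans hv1 hzI.1) hzI.2 (Nat.pos_of_ne_zero hwz)
        exact Finset.mem_filter.mpr ⟨Finset.mem_Icc.mpr ⟨le_trans hv1 hzI.1, hzI.2⟩,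
          (hAiff z).mpr ⟨hzI.1, hzle⟩, hzk⟩
    have hsubtree : ∀ z ∈ (Finset.Icc 1 m).filter (fun z => z ∈ A m g r k ∧ z ≠ k),
        (r k / g k) * ((w4 z : ℝ) * g z) ≤ (w4 z : ℝ) * r z := by
      intro z hz
      have hzf := Finset.mem_filter.mp hz
      have hz' := hIccmem z hzf.1
      have hgz : 0 < g z := gpos hg1 hg hz'.1 hz'.2
      have hrr : r k / g k < r z / g z := chain_rho_lt hzf.2.1.2.2 hzf.2.2
      rw [div_lt_div_iff₀ hgk hgz] at hrr
      have h5 : r k / g k * g z ≤ r z := by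
        rw [div_mul_eq_mul_div, div_le_iff₀ hgk]
        nlinarith
      have hwnn : (0:ℝ) ≤ (w4 z : ℝ) := Nat.cast_nonneg _
      nlinarith
    have hrho0 : (0:ℝ) ≤ r k / g k := (div_pos hrk hgk).le
    have hchain4 : ∑ z ∈ (Finset.Icc 1 m).filter (fun z => z ∈ A m g r k ∧ z ≠ k),
        (r k / g k) * ((w4 z : ℝ) * g z)
        ≤ ∑ z ∈ (Finset.Icc 1 m).filter (fun z => z ∈ A m g r k ∧ z ≠ k),
          (w4 z : ℝ) * r z := Finset.sum_le_sum hsubtree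
    have hmulsum : (r k / g k) * ∑ z ∈ (Finset.Icc 1 m).filter
        (fun z => z ∈ A m g r k ∧ z ≠ k), (w4 z : ℝ) * g z
        = ∑ z ∈ (Finset.Icc 1 m).filter (fun z => z ∈ A m g r k ∧ z ≠ k),
          (r k / g k) * ((w4 z : ℝ) * g z) := Finset.mul_sum _ _ _
    have heq1 : (r k / g k) * g k = r k := div_mul_cancel₀ _ hgk.ne'
    have hfinal : r k ≤ ∑ z ∈ (Finset.Icc 1 m).filter (fun z => z ∈ A m g r k ∧ z ≠ k),
        (w4 z : ℝ) * r z := by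
      have h6 : (r k / g k) * g k ≤ (r k / g k) * ∑ z ∈ (Finset.Icc (v m g r k) m).erase k,
          (w4 z : ℝ) * g z := mul_le_mul_of_nonneg_left hX hrho0
      have h7 : (r k / g k) * ∑ z ∈ (Finset.Icc (v m g r k) m).erase k, (w4 z : ℝ) * g z
          ≤ (r k / g k) * ∑ z ∈ (Finset.Icc 1 m).filter (fun z => z ∈ A m g r k ∧ z ≠ k),
            (w4 z : ℝ) * g z := mul_le_mul_of_nonneg_left hXG hrho0
      rw [hmulsum] at h7
      linarith
    exact absurd hfinal (not_le.mpr (hw4p k hk1 hkm))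
  refine ⟨w4, hw4f, ?_, hw4k, hw4p, hlow, hw4up⟩
  intro w' hw'
  rw [hw4c]
  exact hmincost w' hw'

end BSHM

namespace BSHM

/-- There exists a feasible machine configuration `w*` of minimum
cost such that: (1) `k_opt := max{z ∈ M : w* z > 0} ∈ P(k0)`;
(2) for every `z0 ∈ M`, `∑_{z ∈ A(z0)\{z0}} w* z · r z < r z0`; and
(3) `⌊S(H_{k_opt})/g k_opt⌋ ≤ w* k_opt ≤ ⌈S(H_{k_opt})/g k_opt⌉`. -/
theorem statement_7 {ι : Type*} (m : ℕ) (g r : ℕ → ℝ) (s : ι → ℝ) (𝒥 : Finset ι)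
    (hm : 1 ≤ m)
    (hg1 : 0 < g 1) (hr1 : 0 < r 1)
    (hg : ∀ i j, 1 ≤ i → i < j → j ≤ m → g i < g j)
    (hr : ∀ i j, 1 ≤ i → i < j → j ≤ m → r i < r j)
    (hr8 : ∀ z, 1 ≤ z → z ≤ m → ∃ n : ℤ, r z = (8 : ℝ) ^ n)
    (hJ : 𝒥.Nonempty)
    (hs : ∀ J ∈ 𝒥, 0 < s J ∧ s J ≤ g m) :
    ∃ w : ℕ → ℕ, Feasible m g s 𝒥 w ∧
      (∀ w' : ℕ → ℕ, Feasible m g s 𝒥 w' → cost m r w ≤ cost m r w') ∧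
      (sSup {z | 1 ≤ z ∧ z ≤ m ∧ 0 < w z} ∈ P m g r (k0f m g s 𝒥)) ∧
      (∀ z0, 1 ≤ z0 → z0 ≤ m →
        (∑ z ∈ (Finset.Icc 1 m).filter (fun z => z ∈ A m g r z0 ∧ z ≠ z0),
            (w z : ℝ) * r z) < r z0) ∧
      (⌊SH m g r s 𝒥 (sSup {z | 1 ≤ z ∧ z ≤ m ∧ 0 < w z})
          / g (sSup {z | 1 ≤ z ∧ z ≤ m ∧ 0 < w z})⌋₊
        ≤ w (sSup {z | 1 ≤ z ∧ z ≤ m ∧ 0 < w z}) ∧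
       w (sSup {z | 1 ≤ z ∧ z ≤ m ∧ 0 < w z})
        ≤ ⌈SH m g r s 𝒥 (sSup {z | 1 ≤ z ∧ z ≤ m ∧ 0 < w z})
          / g (sSup {z | 1 ≤ z ∧ z ≤ m ∧ 0 < w z})⌉₊) := by
  exact statement_7' m g r s 𝒥 hm hg1 hr1 hg hr hr8 hJ hs

end BSHM
end
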